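/- arXiv:0912.0988 — 3 statements merged into one kernel-verified Lean document; each statement's English description precedes it below -/
import Mathlib

section
/- Let p be an odd prime and n ≥ 0 an integer. If y, z ∈ ℂ_p satisfy z^{p^n} = y and |y - 1| ≤ p^{-1 - 1/(p-1)}, then |z - 1| ≤ p^{-1/(p^{n-1}(p-1))}. -/
open Filter Topology

section Aux

variable (p : ℕ) [Fact p.Prime] {K : Type*} [NormedField K] [Algebra ℚ_[p] K]

/-- Ultrametric bound for finite sums. -/
lemma aux_sum_lt (hna : ∀ x y : K, ‖x + y‖ ≤ max ‖x‖ ‖y‖)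
    {ι : Type*} (s : Finset ι) (f : ι → K) (B : ℝ) (hB : 0 < B)
    (h : ∀ i ∈ s, ‖f i‖ < B) : ‖∑ i ∈ s, f i‖ < B := by
  classical
  induction s using Finset.cons_induction with
  | empty => simpa using hB
  | cons a s ha ih =>
      rw [Finset.sum_cons]
      refine lt_of_le_of_lt (hna _ _) (max_lt (h a (Finset.mem_cons_self a s)) ?_)
      exact ih fun i hi => h i (Finset.mem_cons_of_mem hi)

lemma aux_nat_norm (hnorm : ∀ x : ℚ_[p], ‖(algebraMap ℚ_[p] K) x‖ = ‖x‖)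
    (m : ℕ) (hm : p ∣ m) : ‖(m : K)‖ ≤ ((p : ℝ))⁻¹ := by
  rw [show ((m : K)) = algebraMap ℚ_[p] K (m : ℚ_[p]) from (map_natCast _ m).symm, hnorm]
  have := (Padic.norm_int_le_pow_iff_dvd (p := p) (m : ℤ) 1).2 (by exact_mod_cast pow_one p ▸ Int.natCast_dvd_natCast.2 hm)
  simpa using this

/-- Key step: if `‖z^p - 1‖ ≤ p^{-c}` with `c ≤ p/(p-1)`, then `‖z-1‖ ≤ p^{-c/p}`. -/
lemma aux_key (hnorm : ∀ x : ℚ_[p], ‖(algebraMap ℚ_[p] K) x‖ = ‖x‖)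
    (hna : ∀ x y : K, ‖x + y‖ ≤ max ‖x‖ ‖y‖)
    (c : ℝ) (hc : c ≤ (p : ℝ) / ((p : ℝ) - 1)) (z : K)
    (h : ‖z ^ p - 1‖ ≤ (p : ℝ) ^ (-c)) : ‖z - 1‖ ≤ (p : ℝ) ^ (-(c / p)) := by
  have hp2 : 2 ≤ p := (Fact.out : p.Prime).two_le
  have hp1 : (1 : ℝ) < (p : ℝ) := by exact_mod_cast (Fact.out : p.Prime).one_lt
  have hp0 : (0 : ℝ) < (p : ℝ) := by linarith
  have hps : (0 : ℝ) < (p : ℝ) - 1 := by linarith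
  set u : K := z - 1 with hu
  by_cases h1 : ‖u‖ ≤ (p : ℝ) ^ (-(1 / ((p : ℝ) - 1)))
  · refine h1.trans ?_
    rw [Real.rpow_le_rpow_left_iff hp1]
    rw [neg_le_neg_iff, div_le_div_iff₀ hp0 hps]
    calc c * ((p:ℝ) - 1) ≤ ((p:ℝ) / ((p:ℝ) - 1)) * ((p:ℝ) - 1) := by nlinarith
      _ = 1 * (p:ℝ) := by field_simp
  · push_neg at h1
    have hu0 : 0 < ‖u‖ := lt_of_le_of_lt (Real.rpow_nonneg hp0.le _) h1
    -- binomial expansion: z^p - 1 = u^p + S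
    have hexp : z ^ p - 1 = u ^ p + ∑ k ∈ Finset.range (p - 1),
        u ^ (k + 1) * (p.choose (k + 1) : K) := by
      have hz : z = u + 1 := by rw [hu]; ring
      rw [hz, add_pow]
      have hsplit : Finset.range (p + 1) = Finset.range p ∪ {p} := by
        rw [Finset.range_add_one]; ext x; simp [or_comm]
      rw [Finset.range_add_one, Finset.sum_insert (by simp)]
      have h0 : p - 1 + 1 = p := by omega
      rw [← h0, Finset.sum_range_succ']
      simp [Nat.choose_self]
      ring
    -- each middle term is strictly smaller than ‖u‖^p
    have hmid : ∀ k ∈ Finset.range (p - 1),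
        ‖u ^ (k + 1) * (p.choose (k + 1) : K)‖ < ‖u‖ ^ p := by
      intro k hk
      rw [Finset.mem_range] at hk
      have hdvd : p ∣ p.choose (k + 1) :=
        Nat.Prime.dvd_choose_self (Fact.out) (by omega) (by omega)
      have hb := aux_nat_norm p hnorm _ hdvd
      rw [norm_mul, norm_pow]
      calc ‖u‖ ^ (k + 1) * ‖((p.choose (k+1) : ℕ) : K)‖
          ≤ ‖u‖ ^ (k + 1) * ((p:ℝ))⁻¹ := by
            exact mul_le_mul_of_nonneg_left hb (by positivity)
        _ < ‖u‖ ^ (k + 1) * ‖u‖ ^ (p - (k+1)) := by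
            refine mul_lt_mul_of_pos_left ?_ (by positivity)
            -- show p⁻¹ < ‖u‖ ^ (p - (k+1))
            rcases le_or_gt 1 ‖u‖ with hge | hlt
            · calc ((p:ℝ))⁻¹ < 1 := by
                    rw [inv_lt_one_iff₀]; right; exact hp1
                _ ≤ ‖u‖ ^ (p - (k+1)) := one_le_pow₀ hge
            · have hcast : (((p - 1 : ℕ) : ℝ)) = (p : ℝ) - 1 := by
                have : 1 ≤ p := by omega
                push_cast [this]; ring
              have hbase : ((p:ℝ) ^ (-(1 / ((p : ℝ) - 1)))) ^ (p - 1) = ((p:ℝ))⁻¹ := by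
                rw [← Real.rpow_natCast ((p:ℝ) ^ (-(1 / ((p : ℝ) - 1)))) (p-1),
                  ← Real.rpow_mul hp0.le, hcast]
                rw [show -(1 / ((p : ℝ) - 1)) * ((p:ℝ) - 1) = -1 from by field_simp]
                exact Real.rpow_neg_one _
              have h3 : ((p:ℝ))⁻¹ < ‖u‖ ^ (p - 1) := by
                rw [← hbase]
                exact pow_lt_pow_left₀ h1 (Real.rpow_nonneg hp0.le _) (by omega)
              refine h3.trans_le ?_
              exact pow_le_pow_of_le_one hu0.le hlt.le (by omega)
        _ = ‖u‖ ^ p := by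
            rw [← pow_add]
            congr 1
            omega
    have hS : ‖∑ k ∈ Finset.range (p - 1), u ^ (k + 1) * (p.choose (k + 1) : K)‖
        < ‖u‖ ^ p := aux_sum_lt hna _ _ _ (pow_pos hu0 p) hmid
    -- hence ‖u‖^p ≤ ‖z^p - 1‖
    have hge : ‖u‖ ^ p ≤ ‖z ^ p - 1‖ := by
      by_contra hcon
      push_neg at hcon
      have : ‖u ^ p‖ ≤ max ‖z ^ p - 1‖ ‖(-(∑ k ∈ Finset.range (p - 1), u ^ (k + 1) * (p.choose (k + 1) : K)))‖ := by
        have heq : u ^ p = (z ^ p - 1) + (-(∑ k ∈ Finset.range (p - 1), u ^ (k + 1) * (p.choose (k + 1) : K))) := by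
          rw [hexp]; ring
        rw [heq]; exact hna _ _
      rw [norm_neg, norm_pow] at this
      rcases max_cases ‖z ^ p - 1‖ ‖∑ k ∈ Finset.range (p - 1), u ^ (k + 1) * (p.choose (k + 1) : K)‖ with ⟨he, _⟩ | ⟨he, _⟩ <;>
        rw [he] at this <;> linarith
    -- conclude
    have hfin : ‖u‖ ^ p ≤ ((p : ℝ) ^ (-(c / p))) ^ p := by
      have : ((p : ℝ) ^ (-(c / p))) ^ p = (p : ℝ) ^ (-c) := by
        rw [← Real.rpow_natCast ((p:ℝ) ^ (-(c/p))) p, ← Real.rpow_mul hp0.le]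
        congr 1
        field_simp
      rw [this]
      exact hge.trans h
    exact le_of_pow_le_pow_left₀ (by omega) (by positivity) hfin

end Aux

/-- If `z^{p^n} = y` and `|y - 1| ≤ p^{-1-1/(p-1)}`, then
`|z - 1| ≤ p^{-1/(p^{n-1}(p-1))}`.  Here `K` plays the role of `ℂ_p`: a complete
algebraically closed nonarchimedean field extension of `ℚ_p` whose norm extends
the `p`-adic norm. -/
theorem statement3 (p : ℕ) [Fact p.Prime] (hodd : Odd p)
    {K : Type*} [NormedField K] [CompleteSpace K] [IsAlgClosed K] [Algebra ℚ_[p] K]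
    (hnorm : ∀ x : ℚ_[p], ‖(algebraMap ℚ_[p] K) x‖ = ‖x‖)
    (hna : ∀ x y : K, ‖x + y‖ ≤ max ‖x‖ ‖y‖)
    (n : ℕ) (y z : K) (hzy : z ^ (p ^ n) = y)
    (hy : ‖y - 1‖ ≤ (p : ℝ) ^ ((-1 : ℝ) - 1 / ((p : ℝ) - 1))) :
    ‖z - 1‖ ≤ (p : ℝ) ^ (-(1 : ℝ) / ((p : ℝ) ^ ((n : ℝ) - 1) * ((p : ℝ) - 1))) := by
  have hp1 : (1 : ℝ) < (p : ℝ) := by exact_mod_cast (Fact.out : p.Prime).one_lt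
  have hp0 : (0 : ℝ) < (p : ℝ) := by linarith
  have hps : (0 : ℝ) < (p : ℝ) - 1 := by linarith
  subst hzy
  induction n generalizing z with
  | zero =>
      simp only [pow_zero, pow_one] at hy
      refine hy.trans (le_of_eq ?_)
      congr 1
      rw [Nat.cast_zero, zero_sub, Real.rpow_neg_one]
      field_simp
      ring
  | succ n ih =>
      have hmul : z ^ p ^ (n + 1) = (z ^ p) ^ p ^ n := by
        rw [← pow_mul, pow_succ]
        ring_nf
      rw [hmul] at hy
      have hzp := ih (z ^ p) hy
      set c : ℝ := (1 : ℝ) / ((p : ℝ) ^ ((n : ℝ) - 1) * ((p : ℝ) - 1)) with hc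
      have hrpos : (0 : ℝ) < (p : ℝ) ^ ((n : ℝ) - 1) := Real.rpow_pos_of_pos hp0 _
      have hpne : (p:ℝ) ≠ 0 := ne_of_gt hp0
      have hpsne : (p:ℝ) - 1 ≠ 0 := ne_of_gt hps
      have hApne : (p : ℝ) ^ ((n : ℝ) - 1) ≠ 0 := ne_of_gt hrpos
      have hzp' : ‖z ^ p - 1‖ ≤ (p : ℝ) ^ (-c) := by
        have hme : -c = -1 / ((p : ℝ) ^ ((n : ℝ) - 1) * ((p : ℝ) - 1)) := by
          rw [hc]; ring
        rw [hme]; exact hzp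
      have hge : (p : ℝ)⁻¹ ≤ (p : ℝ) ^ ((n : ℝ) - 1) := by
        rw [← Real.rpow_neg_one (p : ℝ)]
        refine (Real.rpow_le_rpow_left_iff hp1).2 ?_
        have : (0:ℝ) ≤ (n : ℝ) := Nat.cast_nonneg n
        linarith
      have hcle : c ≤ (p : ℝ) / ((p : ℝ) - 1) := by
        have hA : (p:ℝ)⁻¹ * ((p:ℝ) - 1) ≤ (p:ℝ) ^ ((n:ℝ) - 1) * ((p:ℝ) - 1) :=
          mul_le_mul_of_nonneg_right hge hps.le
        have h2 : c ≤ 1 / ((p:ℝ)⁻¹ * ((p:ℝ) - 1)) := by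
          rw [hc]
          exact one_div_le_one_div_of_le (by positivity) hA
        have h3 : 1 / ((p:ℝ)⁻¹ * ((p:ℝ) - 1)) = (p:ℝ) / ((p:ℝ) - 1) := by
          field_simp
        linarith
      refine (aux_key p hnorm hna c hcle z hzp').trans (le_of_eq ?_)
      congr 1
      have h1 : (p : ℝ) ^ ((((n+1 : ℕ)) : ℝ) - 1) = (p : ℝ) ^ ((n : ℝ) - 1) * (p:ℝ) := by
        push_cast
        rw [show (n : ℝ) + 1 - 1 = ((n:ℝ) - 1) + 1 from by ring, Real.rpow_add hp0,
          Real.rpow_one]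
      rw [h1, hc]
      field_simp
end

section
/- Let p be an odd prime and n ≥ 0 an integer. For t, t' ∈ ℂ_p with |t - 1| ≤ p^{-1/(p^{n-1}(p-1))} and |t' - 1| ≤ p^{-1/(p^{n-1}(p-1))}, one has log_p(t) = log_p(t') if and only if (t/t')^{p^n} = 1. In particular, the map t ↦ log_p(t)/log_p(1+p) identifies the quotient of the multiplicative group {t ∈ ℂ_p : |t-1| ≤ p^{-1/(p^{n-1}(p-1))}} by its subgroup of p^n-th roots of unity with the additive group {x ∈ ℂ_p : |x| ≤ p^{n-1/(p-1)}}. -/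
open Filter Topology

/-- The `p`-adic logarithm, given by the series
`log_p(t) = ∑_{k ≥ 1} (-1)^(k+1) (t-1)^k / k` (convergent for `‖t - 1‖ < 1`). -/
noncomputable def plog {K : Type*} [NormedField K] (t : K) : K :=
  ∑' k : ℕ, (-1) ^ k * (t - 1) ^ (k + 1) / ((k + 1 : ℕ) : K)

set_option linter.unusedSectionVars false
set_option maxHeartbeats 1000000
open Polynomial

namespace PlogAux


/-- the polynomial `(1+X)^m - 1` over `ℚ` -/
noncomputable def UQ (m : ℕ) : ℚ[X] := (1 + X) ^ m - 1

/-- the polynomial `(1+X)^m - 1` over `ℤ` -/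
noncomputable def UZ (m : ℕ) : ℤ[X] := (1 + X) ^ m - 1

/-- partial sums of `log((1+X)^m) - m log(1+X)` -/
noncomputable def GQ (m N : ℕ) : ℚ[X] :=
  ∑ k ∈ Finset.range N, C ((-1)^k / (k+1 : ℚ)) * ((UQ m)^(k+1) - C (m:ℚ) * X^(k+1))

lemma telescope {R : Type*} [CommRing R] (Y : R) (N : ℕ) :
    ∑ k ∈ Finset.range N, (-1:R)^k * (Y^k + Y^(k+1)) = 1 - (-1)^N * Y^N := by
  induction N with
  | zero => simp
  | succ n ih =>
    rw [Finset.sum_range_succ, ih]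
    simp only [pow_succ]
    ring

lemma X_dvd_UQ (m : ℕ) : (X : ℚ[X]) ∣ UQ m := by
  rw [X_dvd_iff, coeff_zero_eq_eval_zero, UQ]
  simp

lemma hkeyU (m : ℕ) (hm : 1 ≤ m) :
    (1 + X) * derivative (UQ m) = C (m:ℚ) * (1 + UQ m) := by
  have h1 : derivative (UQ m) = C (m:ℚ) * (1+X)^(m-1) := by
    simp [UQ, derivative_pow]
  rw [h1, UQ]
  have h2 : (1 + X : ℚ[X]) * (1+X)^(m-1) = (1+X)^m := by
    rw [← pow_succ']
    congr 1
    omega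
  ring_nf
  rw [mul_comm (C (m:ℚ)) ((1+X : ℚ[X])^(m-1)), mul_assoc]
  ring_nf
  rw [← h2]
  ring

lemma deriv_term (m k : ℕ) (hm : 1 ≤ m) :
    (1 + X) * derivative (C ((-1)^k / (k+1 : ℚ)) * ((UQ m)^(k+1) - C (m:ℚ) * X^(k+1)))
    = C (m:ℚ) * ((-1:ℚ[X])^k * (((UQ m)^k + (UQ m)^(k+1)) - (X^k + X^(k+1)))) := by
  have hc : ((-1)^k / (k+1 : ℚ)) * ((k:ℚ)+1) = (-1:ℚ)^k := by
    field_simp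
  have hkey := hkeyU m hm
  have hCk : (C ((-1)^k / (k+1 : ℚ))) * C ((k:ℚ)+1) = ((-1:ℚ[X]))^k := by
    rw [← C_mul, hc]
    simp
  have hcast : ((k+1 : ℕ) : ℚ) = (k:ℚ)+1 := by push_cast; ring
  rw [derivative_C_mul, derivative_sub, derivative_pow, derivative_C_mul, derivative_pow,
    derivative_X, hcast]
  simp only [Nat.add_sub_cancel]
  linear_combination (C ((-1)^k / (k+1 : ℚ)) * C ((k:ℚ)+1) * (UQ m)^k) * hkey +
    (C (m:ℚ) * (((UQ m)^k + (UQ m)^(k+1)) - (X^k + X^(k+1)))) * hCk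

lemma deriv_GQ (m N : ℕ) (hm : 1 ≤ m) :
    (1 + X) * derivative (GQ m N)
    = C (m:ℚ) * (((-1:ℚ[X])^N * X^N) - ((-1:ℚ[X])^N * (UQ m)^N)) := by
  rw [GQ, derivative_sum, Finset.mul_sum]
  rw [Finset.sum_congr rfl (fun k _ => deriv_term m k hm)]
  rw [← Finset.mul_sum]
  have h1 : ∑ k ∈ Finset.range N, ((-1:ℚ[X])^k * (((UQ m)^k + (UQ m)^(k+1)) - (X^k + X^(k+1))))
      = (1 - (-1:ℚ[X])^N * (UQ m)^N) - (1 - (-1:ℚ[X])^N * X^N) := by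
    rw [← telescope (UQ m) N, ← telescope (X : ℚ[X]) N, ← Finset.sum_sub_distrib]
    apply Finset.sum_congr rfl
    intro k _
    ring
  rw [h1]
  ring

lemma coeff_deriv_GQ (m N : ℕ) (hm : 1 ≤ m) (j : ℕ) (hj : j < N) :
    (derivative (GQ m N)).coeff j = 0 := by
  have hdvd : (X : ℚ[X])^N ∣ (1 + X) * derivative (GQ m N) := by
    rw [deriv_GQ m N hm]
    apply Dvd.dvd.mul_left
    apply dvd_sub
    · exact Dvd.dvd.mul_left dvd_rfl _
    · exact Dvd.dvd.mul_left (pow_dvd_pow_of_dvd (X_dvd_UQ m) N) _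
  obtain ⟨R, hR⟩ := hdvd
  have hcoeff : ∀ i, i < N → ((1 + X) * derivative (GQ m N)).coeff i = 0 := by
    intro i hi
    rw [hR, mul_comm, coeff_mul_X_pow']
    simp [Nat.not_le.mpr hi]
  clear hR
  induction j using Nat.strong_induction_on with
  | _ j ih =>
    have h0 := hcoeff j hj
    rw [add_mul, one_mul, coeff_add] at h0
    cases j with
    | zero =>
      rw [mul_coeff_zero] at h0
      simpa using h0
    | succ i =>
      rw [coeff_X_mul, ih i (by omega) (by omega)] at h0
      simpa using h0

lemma coeff_GQ (m N : ℕ) (hm : 1 ≤ m) (i : ℕ) (hi : i ≤ N) : (GQ m N).coeff i = 0 := by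
  cases i with
  | zero =>
    rw [coeff_zero_eq_eval_zero, GQ]
    rw [eval_finset_sum]
    apply Finset.sum_eq_zero
    intro k _
    have h0 : (UQ m).eval 0 = 0 := by simp [UQ]
    simp [h0]
  | succ i =>
    have h1 := coeff_deriv_GQ m N hm i (by omega)
    rw [coeff_derivative] at h1
    have h2 : ((i:ℚ)+1) ≠ 0 := by positivity
    exact (mul_eq_zero.mp h1).resolve_right h2

noncomputable def EZ (m k : ℕ) : ℤ[X] := (UZ m)^(k+1) - C (m:ℤ) * X^(k+1)

lemma EZ_map (m k : ℕ) :
    (UQ m)^(k+1) - C (m:ℚ) * X^(k+1) = (EZ m k).map (Int.castRingHom ℚ) := by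
  simp only [EZ, UZ, UQ, Polynomial.map_sub, Polynomial.map_pow, Polynomial.map_add,
    Polynomial.map_one, Polynomial.map_X, Polynomial.map_mul, Polynomial.map_C]
  norm_num

lemma coeff_GQ_eq (m N i : ℕ) :
    (GQ m N).coeff i
    = ∑ k ∈ Finset.range N, ((-1)^k / (k+1 : ℚ)) * (((EZ m k).coeff i : ℚ)) := by
  rw [GQ, finset_sum_coeff]
  apply Finset.sum_congr rfl
  intro k _
  rw [coeff_C_mul, EZ_map, coeff_map]
  rfl



variable {p : ℕ} [hp : Fact p.Prime] {K : Type*} [NormedField K]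

noncomputable def lterm (w : K) (k : ℕ) : K := (-1) ^ k * w ^ (k + 1) / ((k + 1 : ℕ) : K)

lemma plog_eq (t : K) : plog t = ∑' k, lterm (t - 1) k := rfl

lemma plog_one_add (w : K) : plog (1 + w) = ∑' k, lterm w k := by
  simp [plog_eq, add_sub_cancel_left]

lemma lterm_zero (w : K) : lterm w 0 = w := by simp [lterm]

lemma lterm_of_zero (k : ℕ) : lterm (0 : K) k = 0 := by simp [lterm]

lemma plog_one : plog (1 : K) = 0 := by
  rw [show (1:K) = 1 + 0 by ring, plog_one_add]
  simp [lterm_of_zero]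

lemma pval_add_two_le (hp3 : 3 ≤ p) (m : ℕ) (hm : 2 ≤ m) : padicValNat p m + 2 ≤ m := by
  have h4 : ∀ v : ℕ, 1 ≤ v → v + 2 ≤ 3 ^ v := by
    intro v hv
    induction v with
    | zero => omega
    | succ k ih =>
      rcases Nat.eq_zero_or_pos k with rfl | hk
      · norm_num
      · have h5 : 3 ^ (k+1) = 3 * 3 ^ k := by ring
        have := ih hk
        omega
  set v := padicValNat p m with hv
  rcases Nat.eq_zero_or_pos v with h0 | h1
  · omega
  · have h2 : p ^ v ≤ m := Nat.le_of_dvd (by omega) pow_padicValNat_dvd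
    have h3 : 3 ^ v ≤ p ^ v := Nat.pow_le_pow_left hp3 v
    have := h4 v h1
    omega

section WithAlg
variable [Algebra ℚ_[p] K]
variable (hnorm : ∀ x : ℚ_[p], ‖(algebraMap ℚ_[p] K) x‖ = ‖x‖)
include hnorm

lemma norm_ratCast (q : ℚ) : ‖(q : K)‖ = ‖(q : ℚ_[p])‖ := by
  rw [← map_ratCast (algebraMap ℚ_[p] K), hnorm]

lemma norm_natCast (m : ℕ) : ‖(m : K)‖ = ‖(m : ℚ_[p])‖ := by
  rw [← map_natCast (algebraMap ℚ_[p] K), hnorm]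

lemma norm_intCast (m : ℤ) : ‖(m : K)‖ = ‖(m : ℚ_[p])‖ := by
  rw [← map_intCast (algebraMap ℚ_[p] K), hnorm]

lemma norm_intCast_le_one (m : ℤ) : ‖(m : K)‖ ≤ 1 := by
  rw [norm_intCast hnorm]; exact Padic.norm_int_le_one m

lemma norm_natCast_le_one (m : ℕ) : ‖(m : K)‖ ≤ 1 := by
  simpa using norm_intCast_le_one hnorm (m : ℤ)

lemma norm_natCast_eq (k : ℕ) (hk : k ≠ 0) :
    ‖(k : K)‖ = ((p : ℝ) ^ (padicValNat p k : ℕ))⁻¹ := by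
  rw [norm_natCast hnorm, Padic.norm_eq_zpow_neg_valuation (by exact_mod_cast hk),
    Padic.valuation_natCast, zpow_neg, zpow_natCast]

lemma norm_pK : ‖((p : ℕ) : K)‖ = (p : ℝ)⁻¹ := by
  rw [norm_natCast hnorm]; exact Padic.norm_p

lemma norm_lterm (w : K) (k : ℕ) :
    ‖lterm w k‖ = ‖w‖ ^ (k+1) * (p:ℝ) ^ (padicValNat p (k+1) : ℕ) := by
  rw [lterm, norm_div, norm_mul, norm_pow, norm_neg, norm_one, one_pow, one_mul,
    norm_natCast_eq hnorm _ (Nat.succ_ne_zero k), div_eq_mul_inv, inv_inv, norm_pow]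

lemma pval_pow_le (k : ℕ) (hk : k ≠ 0) : ((p:ℝ)) ^ (padicValNat p k : ℕ) ≤ (k:ℝ) := by
  exact_mod_cast Nat.le_of_dvd (Nat.pos_of_ne_zero hk) pow_padicValNat_dvd

end WithAlg

section Ultra
variable [IsUltrametricDist K] [Algebra ℚ_[p] K]
variable (hnorm : ∀ x : ℚ_[p], ‖(algebraMap ℚ_[p] K) x‖ = ‖x‖)

lemma norm_pow_sub_pow (w w' : K) (r : ℝ) (hw : ‖w‖ ≤ r) (hw' : ‖w'‖ ≤ r) (m : ℕ) :
    ‖w ^ (m+1) - w' ^ (m+1)‖ ≤ r ^ m * ‖w - w'‖ := by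
  have hr : 0 ≤ r := le_trans (norm_nonneg w) hw
  rw [← geom_sum₂_mul w w' (m+1), norm_mul]
  gcongr
  apply IsUltrametricDist.norm_sum_le_of_forall_le_of_nonneg (by positivity)
  intro i hi
  rw [Finset.mem_range] at hi
  rw [norm_mul, norm_pow, norm_pow]
  calc ‖w‖^i * ‖w'‖^(m+1-1-i) ≤ r^i * r^(m+1-1-i) := by gcongr
  _ = r ^ m := by rw [← pow_add]; congr 1; omega

include hnorm

variable [CompleteSpace K]

lemma summable_lterm (w : K) (hw : ‖w‖ < 1) : Summable (lterm w) := by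
  apply NonarchimedeanAddGroup.summable_of_tendsto_cofinite_zero
  rw [Nat.cofinite_eq_atTop, tendsto_zero_iff_norm_tendsto_zero]
  have h0 : Tendsto (fun m : ℕ => (m:ℝ) * ‖w‖ ^ m) atTop (𝓝 0) :=
    tendsto_self_mul_const_pow_of_lt_one (norm_nonneg w) hw
  have h1 := h0.comp (tendsto_add_atTop_nat 1)
  apply squeeze_zero (fun k => norm_nonneg _) _ h1
  intro k
  rw [norm_lterm hnorm]
  calc ‖w‖ ^ (k+1) * (p:ℝ) ^ (padicValNat p (k+1) : ℕ)
      ≤ ‖w‖ ^ (k+1) * ((k+1 : ℕ) : ℝ) := by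
        gcongr
        exact pval_pow_le hnorm _ (Nat.succ_ne_zero k)
  _ = ((k+1 : ℕ):ℝ) * ‖w‖ ^ (k+1) := by ring

lemma summable_lterm_succ (w : K) (hw : ‖w‖ < 1) : Summable (fun k => lterm w (k+1)) :=
  (summable_nat_add_iff 1).mpr (summable_lterm hnorm w hw)

lemma plog_sub (w : K) (hw : ‖w‖ < 1) : plog (1+w) - w = ∑' k, lterm w (k+1) := by
  rw [plog_one_add, Summable.tsum_eq_zero_add (summable_lterm hnorm w hw), lterm_zero]; ring

lemma norm_lterm_succ_sub (hp3 : 3 ≤ p) (w w' : K) (hw : ‖w‖ ≤ (p:ℝ)⁻¹)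
    (hw' : ‖w'‖ ≤ (p:ℝ)⁻¹) (k : ℕ) :
    ‖lterm w (k+1) - lterm w' (k+1)‖ ≤ (p:ℝ)⁻¹ * ‖w - w'‖ := by
  have hp1 : (1:ℝ) < p := by exact_mod_cast hp.out.one_lt
  have hppos : (0:ℝ) < p := by positivity
  have hdiff : lterm w (k+1) - lterm w' (k+1)
      = (-1)^(k+1) * ((w ^ (k+2) - w' ^ (k+2))) / ((k+2 : ℕ) : K) := by
    simp only [lterm]; ring
  rw [hdiff, norm_div, norm_mul, norm_pow, norm_neg, norm_one, one_pow, one_mul,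
    norm_natCast_eq hnorm _ (by omega), div_eq_mul_inv, inv_inv]
  have h1 : ‖w ^ (k+2) - w' ^ (k+2)‖ ≤ ((p:ℝ)⁻¹) ^ (k+1) * ‖w - w'‖ :=
    norm_pow_sub_pow w w' _ hw hw' (k+1)
  have hv : padicValNat p (k+2) ≤ k := by
    have := pval_add_two_le hp3 (k+2) (by omega); omega
  calc ‖w ^ (k+2) - w' ^ (k+2)‖ * (p:ℝ) ^ (padicValNat p (k+2) : ℕ)
      ≤ (((p:ℝ)⁻¹) ^ (k+1) * ‖w - w'‖) * (p:ℝ) ^ k := by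
        apply mul_le_mul h1 (pow_le_pow_right₀ hp1.le hv) (by positivity) (by positivity)
  _ = (((p:ℝ)⁻¹) ^ (k+1) * (p:ℝ) ^ k) * ‖w - w'‖ := by ring
  _ = (p:ℝ)⁻¹ * ‖w - w'‖ := by
        congr 1
        rw [pow_succ, inv_pow]
        field_simp

lemma plog_remainder_sub (hp3 : 3 ≤ p) (w w' : K) (hw : ‖w‖ ≤ (p:ℝ)⁻¹)
    (hw' : ‖w'‖ ≤ (p:ℝ)⁻¹) :
    ‖(plog (1+w) - w) - (plog (1+w') - w')‖ ≤ (p:ℝ)⁻¹ * ‖w - w'‖ := by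
  have hp1 : (1:ℝ) < p := by exact_mod_cast hp.out.one_lt
  have hinv : (p:ℝ)⁻¹ < 1 := by
    rw [inv_lt_one_iff₀]; right; exact hp1
  have h1 : ‖w‖ < 1 := lt_of_le_of_lt hw hinv
  have h1' : ‖w'‖ < 1 := lt_of_le_of_lt hw' hinv
  rw [plog_sub hnorm w h1, plog_sub hnorm w' h1',
    ← Summable.tsum_sub (summable_lterm_succ hnorm w h1) (summable_lterm_succ hnorm w' h1')]
  apply IsUltrametricDist.norm_tsum_le_of_forall_le_of_nonneg
    (by positivity)
  intro k
  exact norm_lterm_succ_sub hnorm hp3 w w' hw hw' k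

lemma plog_remainder (hp3 : 3 ≤ p) (w : K) (hw : ‖w‖ ≤ (p:ℝ)⁻¹) :
    ‖plog (1+w) - w‖ ≤ (p:ℝ)⁻¹ * ‖w‖ := by
  have := plog_remainder_sub hnorm hp3 w 0 hw (by simp)
  simpa [plog_one] using this

lemma norm_plog_eq (hp3 : 3 ≤ p) (w : K) (hw : ‖w‖ ≤ (p:ℝ)⁻¹) :
    ‖plog (1+w)‖ = ‖w‖ := by
  rcases eq_or_ne w 0 with rfl | hw0
  · simp [plog_one]
  · have hp1 : (1:ℝ) < p := by exact_mod_cast hp.out.one_lt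
    have hinv : (p:ℝ)⁻¹ < 1 := by rw [inv_lt_one_iff₀]; right; exact hp1
    have h := plog_remainder hnorm hp3 w hw
    have hlt : ‖plog (1+w) - w‖ < ‖w‖ := by
      apply lt_of_le_of_lt h
      exact mul_lt_of_lt_one_left (norm_pos_iff.mpr hw0) hinv
    have hrw : plog (1+w) = w + (plog (1+w) - w) := by ring
    rw [hrw, IsUltrametricDist.norm_add_eq_max_of_norm_ne_norm (ne_of_gt hlt)]
    exact max_eq_left hlt.le

lemma plog_inj (hp3 : 3 ≤ p) (w w' : K) (hw : ‖w‖ ≤ (p:ℝ)⁻¹) (hw' : ‖w'‖ ≤ (p:ℝ)⁻¹)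
    (h : plog (1+w) = plog (1+w')) : w = w' := by
  have hp1 : (1:ℝ) < p := by exact_mod_cast hp.out.one_lt
  have hinv : (p:ℝ)⁻¹ < 1 := by rw [inv_lt_one_iff₀]; right; exact hp1
  have h2 := plog_remainder_sub hnorm hp3 w w' hw hw'
  rw [h] at h2
  have h3 : ‖w - w'‖ ≤ (p:ℝ)⁻¹ * ‖w - w'‖ := by
    calc ‖w - w'‖ = ‖plog (1+w') - w - (plog (1+w') - w')‖ := by
          rw [show plog (1+w') - w - (plog (1+w') - w') = w' - w by ring, norm_sub_rev]
    _ ≤ (p:ℝ)⁻¹ * ‖w - w'‖ := h2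
  by_contra hne
  have hpos : 0 < ‖w - w'‖ := norm_pos_iff.mpr (sub_ne_zero.mpr hne)
  nlinarith

end Ultra

section KSide
variable {p : ℕ} [hp : Fact p.Prime] {K : Type*} [NormedField K]
  [IsUltrametricDist K] [Algebra ℚ_[p] K] [CharZero K]
variable (hnorm : ∀ x : ℚ_[p], ‖(algebraMap ℚ_[p] K) x‖ = ‖x‖)

lemma norm_one_add_pow_sub_one_le (w : K) (hw : ‖w‖ ≤ 1) (m : ℕ) :
    ‖(1+w)^m - 1‖ ≤ ‖w‖ := by
  induction m with
  | zero => simp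
  | succ n ih =>
    have h1 : (1+w)^(n+1) - 1 = ((1+w)^n - 1) * (1+w) + w := by ring
    rw [h1]
    apply le_trans (IsUltrametricDist.norm_add_le_max _ _)
    apply max_le _ le_rfl
    rw [norm_mul]
    have h2 : ‖1 + w‖ ≤ 1 := by
      apply le_trans (IsUltrametricDist.norm_add_le_max 1 w)
      simp [hw]
    calc ‖(1+w)^n - 1‖ * ‖1+w‖ ≤ ‖w‖ * 1 := by
          apply mul_le_mul ih h2 (norm_nonneg _) (norm_nonneg _)
    _ = ‖w‖ := mul_one _

include hnorm

lemma cast_ck (k : ℕ) : (((-1)^k / (k+1 : ℚ) : ℚ) : K) = (-1:K)^k / ((k+1:ℕ) : K) := by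
  push_cast
  ring

lemma norm_cast_ck (k : ℕ) : ‖(((-1)^k / (k+1 : ℚ) : ℚ) : K)‖ ≤ ((k:ℝ)+1) := by
  rw [cast_ck hnorm, norm_div, norm_pow, norm_neg, norm_one, one_pow,
    norm_natCast_eq hnorm _ (Nat.succ_ne_zero k), one_div, inv_inv]
  calc (p:ℝ) ^ (padicValNat p (k+1) : ℕ) ≤ ((k+1 : ℕ):ℝ) :=
        pval_pow_le hnorm _ (Nat.succ_ne_zero k)
  _ = (k:ℝ)+1 := by push_cast; ring

lemma norm_coeff_GQ (m N i : ℕ) : ‖(((GQ m N).coeff i : ℚ) : K)‖ ≤ (N:ℝ) := by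
  rw [coeff_GQ_eq]
  push_cast
  apply IsUltrametricDist.norm_sum_le_of_forall_le_of_nonneg (Nat.cast_nonneg N)
  intro k hk
  rw [Finset.mem_range] at hk
  rw [norm_mul]
  have h1 : ‖(((-1:K))^k / ((k+1:ℕ) : K))‖ ≤ ((k:ℝ)+1) := by
    have := norm_cast_ck hnorm (K := K) k
    rwa [cast_ck hnorm] at this
  have h2 : ‖(((EZ m k).coeff i : ℤ) : K)‖ ≤ 1 := norm_intCast_le_one hnorm _
  have h1' : ‖(((-1:K))^k / ((k:K)+1))‖ ≤ ((k:ℝ)+1) := by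
    have hcast : ((k+1:ℕ) : K) = (k:K)+1 := by push_cast; ring
    rwa [hcast] at h1
  calc ‖(-1:K)^k / ((k:K)+1)‖ * ‖(((EZ m k).coeff i : ℤ) : K)‖
      ≤ ((k:ℝ)+1) * 1 := by
        apply mul_le_mul h1' h2 (norm_nonneg _) (by positivity)
  _ = (k:ℝ)+1 := mul_one _
  _ ≤ (N:ℝ) := by exact_mod_cast Nat.succ_le_of_lt hk


lemma aeval_GQ (m N : ℕ) (w : K) :
    (Polynomial.aeval w) (GQ m N)
    = (∑ k ∈ Finset.range N, lterm ((1+w)^m - 1) k)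
      - (m:K) * ∑ k ∈ Finset.range N, lterm w k := by
  rw [GQ, map_sum, Finset.mul_sum, ← Finset.sum_sub_distrib]
  apply Finset.sum_congr rfl
  intro k _
  have hU : (Polynomial.aeval w) (UQ m) = (1+w)^m - 1 := by
    simp [UQ]
  have hC : (Polynomial.aeval w) (C ((-1)^k / (k+1 : ℚ))) = (-1:K)^k / ((k+1:ℕ) : K) := by
    rw [aeval_C, eq_ratCast, cast_ck hnorm]
  rw [map_mul, map_sub, map_pow, hU, hC, map_mul, map_pow, aeval_X, aeval_C, eq_ratCast]
  rw [lterm, lterm]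
  push_cast
  ring

lemma norm_aeval_GQ (m N : ℕ) (hm : 1 ≤ m) (w : K) (hw : ‖w‖ ≤ 1) :
    ‖(Polynomial.aeval w) (GQ m N)‖ ≤ (N:ℝ) * ‖w‖^(N+1) := by
  rw [Polynomial.aeval_def, Polynomial.eval₂_eq_sum, Polynomial.sum]
  apply IsUltrametricDist.norm_sum_le_of_forall_le_of_nonneg (by positivity)
  intro i hi
  have hne := Polynomial.mem_support_iff.mp hi
  have hiN : N + 1 ≤ i := by
    by_contra hcon
    exact hne (coeff_GQ m N hm i (by omega))
  rw [norm_mul]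
  have h1 : ‖(algebraMap ℚ K) ((GQ m N).coeff i)‖ ≤ (N:ℝ) := by
    rw [eq_ratCast]
    exact norm_coeff_GQ hnorm m N i
  calc ‖(algebraMap ℚ K) ((GQ m N).coeff i)‖ * ‖w^i‖
      ≤ (N:ℝ) * ‖w‖^(N+1) := by
        rw [norm_pow]
        apply mul_le_mul h1 _ (by positivity) (Nat.cast_nonneg N)
        exact pow_le_pow_of_le_one (norm_nonneg w) hw hiN

variable [CompleteSpace K]

lemma plog_pow_m (m : ℕ) (hm : 1 ≤ m) (t : K) (h : ‖t - 1‖ < 1) :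
    plog (t ^ m) = (m:K) * plog t := by
  set w := t - 1 with hwdef
  have ht : t = 1 + w := by rw [hwdef]; ring
  have hw1 : ‖w‖ ≤ 1 := h.le
  have htp : ‖t^m - 1‖ < 1 := by
    have h2 := norm_one_add_pow_sub_one_le (w := w) hw1 m
    rw [← ht] at h2
    exact lt_of_le_of_lt h2 h
  have hs1 : Summable (lterm (t^m - 1)) := summable_lterm hnorm _ htp
  have hs2 : Summable (lterm w) := summable_lterm hnorm _ h
  have L1 : Tendsto (fun N => ∑ k ∈ Finset.range N, lterm (t^m-1) k) atTop
      (𝓝 (plog (t^m))) := by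
    rw [plog_eq]
    exact hs1.hasSum.tendsto_sum_nat
  have L2 : Tendsto (fun N => (m:K) * ∑ k ∈ Finset.range N, lterm w k) atTop
      (𝓝 ((m:K) * plog t)) := by
    rw [plog_eq t, ← hwdef]
    exact (hs2.hasSum.tendsto_sum_nat).const_mul _
  have L3 := L1.sub L2
  have heq : ∀ N, (∑ k ∈ Finset.range N, lterm (t^m-1) k)
      - (m:K) * ∑ k ∈ Finset.range N, lterm w k = (Polynomial.aeval w) (GQ m N) := by
    intro N
    rw [aeval_GQ hnorm, ← ht]
  have L4 : Tendsto (fun N : ℕ => (Polynomial.aeval w) (GQ m N)) atTop (𝓝 0) := by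
    rw [tendsto_zero_iff_norm_tendsto_zero]
    have hb : Tendsto (fun N : ℕ => ((N:ℝ) * ‖w‖^N) * ‖w‖) atTop (𝓝 (0 * ‖w‖)) :=
      (tendsto_self_mul_const_pow_of_lt_one (norm_nonneg w) h).mul_const _
    rw [zero_mul] at hb
    apply squeeze_zero (fun N => norm_nonneg _) _ hb
    intro N
    calc ‖(Polynomial.aeval w) (GQ m N)‖ ≤ (N:ℝ) * ‖w‖^(N+1) :=
          norm_aeval_GQ hnorm m N hm w hw1
    _ = ((N:ℝ) * ‖w‖^N) * ‖w‖ := by rw [pow_succ]; ring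
  have L5 : Tendsto (fun N => (∑ k ∈ Finset.range N, lterm (t^m-1) k)
      - (m:K) * ∑ k ∈ Finset.range N, lterm w k) atTop (𝓝 0) := by
    rw [show (fun N => (∑ k ∈ Finset.range N, lterm (t^m-1) k)
      - (m:K) * ∑ k ∈ Finset.range N, lterm w k) = fun N => (Polynomial.aeval w) (GQ m N)
      from funext heq]
    exact L4
  have := tendsto_nhds_unique L3 L5
  rw [sub_eq_zero] at this
  exact this

end KSide

section Srad

/-- the radius `p^(-1/(p^x (p-1)))` -/
noncomputable def Srad (p : ℕ) (x : ℝ) : ℝ :=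
  (p:ℝ) ^ (-(1:ℝ) / ((p:ℝ) ^ x * ((p:ℝ) - 1)))

variable {p : ℕ} [hp : Fact p.Prime]

lemma hp1R : (1:ℝ) < (p:ℝ) := by exact_mod_cast hp.out.one_lt

lemma hppos : (0:ℝ) < (p:ℝ) := lt_trans one_pos hp1R

lemma Srad_pos (x : ℝ) : 0 < Srad p x := Real.rpow_pos_of_pos hppos _

lemma Srad_lt_one (x : ℝ) : Srad p x < 1 := by
  apply Real.rpow_lt_one_of_one_lt_of_neg hp1R
  apply div_neg_of_neg_of_pos (by norm_num)
  have h1 : (0:ℝ) < (p:ℝ) ^ x := Real.rpow_pos_of_pos hppos x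
  have h2 : (0:ℝ) < (p:ℝ) - 1 := by linarith [hp1R (p := p)]
  positivity

lemma Srad_mono {x y : ℝ} (h : x ≤ y) : Srad p x ≤ Srad p y := by
  apply Real.rpow_le_rpow_of_exponent_le hp1R.le
  have h1 : (0:ℝ) < (p:ℝ) ^ x := Real.rpow_pos_of_pos hppos x
  have h2 : (0:ℝ) < (p:ℝ) - 1 := by linarith [hp1R (p := p)]
  have h3 : (p:ℝ) ^ x ≤ (p:ℝ) ^ y := Real.rpow_le_rpow_of_exponent_le hp1R.le h
  rw [neg_div, neg_div, neg_le_neg_iff]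
  apply div_le_div_of_nonneg_left (by norm_num) (by positivity)
  apply mul_le_mul_of_nonneg_right h3 h2.le

lemma Srad_pow (x : ℝ) : (Srad p x) ^ (p : ℕ) = Srad p (x - 1) := by
  have h0 : (0:ℝ) ≤ (p:ℝ) := hppos.le
  have hpx : (0:ℝ) < (p:ℝ) ^ x := Real.rpow_pos_of_pos hppos x
  have h2 : (0:ℝ) < (p:ℝ) - 1 := by linarith [hp1R (p := p)]
  rw [Srad, Srad, ← Real.rpow_natCast ((p:ℝ) ^ (-(1:ℝ) / ((p:ℝ) ^ x * ((p:ℝ) - 1)))) p,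
    ← Real.rpow_mul h0]
  congr 1
  rw [Real.rpow_sub hppos, Real.rpow_one]
  have hpne : (p:ℝ) ≠ 0 := hppos.ne'
  have hpxne : (p:ℝ) ^ x ≠ 0 := hpx.ne'
  have h2ne : (p:ℝ) - 1 ≠ 0 := h2.ne'
  field_simp <;> ring

lemma Srad_inv_mul_le {x : ℝ} (hx : 0 ≤ x) : (p:ℝ)⁻¹ * Srad p x ≤ Srad p (x - 1) := by
  have hpx : (0:ℝ) < (p:ℝ) ^ x := Real.rpow_pos_of_pos hppos x
  have h2 : (0:ℝ) < (p:ℝ) - 1 := by linarith [hp1R (p := p)]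
  have hB : (1:ℝ) ≤ (p:ℝ) ^ x := Real.one_le_rpow hp1R.le hx
  rw [Srad, Srad, ← Real.rpow_neg_one (p:ℝ), ← Real.rpow_add hppos]
  apply Real.rpow_le_rpow_of_exponent_le hp1R.le
  rw [Real.rpow_sub hppos, Real.rpow_one]
  set B := (p:ℝ) ^ x
  have hC : (0:ℝ) < B * ((p:ℝ) - 1) := by positivity
  have key : (p:ℝ) - 1 ≤ B * ((p:ℝ) - 1) := le_mul_of_one_le_left h2.le hB
  have hpne : (p:ℝ) ≠ 0 := hppos.ne'
  have hBne : B ≠ 0 := hpx.ne'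
  have h2ne : (p:ℝ) - 1 ≠ 0 := h2.ne'
  have h3 : -(1:ℝ) / (B / (p:ℝ) * ((p:ℝ) - 1)) = -((p:ℝ) / (B * ((p:ℝ) - 1))) := by
    field_simp
  rw [h3, neg_div]
  have h4 : ((p:ℝ) - 1) / (B * ((p:ℝ) - 1)) ≤ 1 := (div_le_one hC).mpr key
  have h5 : ((p:ℝ) - 1) / (B * ((p:ℝ) - 1)) = (p:ℝ) / (B * ((p:ℝ) - 1)) - 1 / (B * ((p:ℝ) - 1)) := by
    rw [← sub_div]
  linarith

lemma bernoulli_zpow (d : ℤ) : 1 + ((p:ℝ) - 1) * d ≤ (p:ℝ) ^ d := by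
  have h2 : (0:ℝ) < (p:ℝ) - 1 := by linarith [hp1R (p := p)]
  rcases le_or_gt 0 d with hd | hd
  · obtain ⟨m, rfl⟩ := Int.eq_ofNat_of_zero_le hd
    rw [zpow_natCast]
    have := one_add_mul_le_pow (a := (p:ℝ) - 1) (by linarith) m
    calc (1:ℝ) + ((p:ℝ)-1) * (m:ℤ) = 1 + (m:ℝ) * ((p:ℝ)-1) := by push_cast; ring
    _ ≤ (1 + ((p:ℝ)-1)) ^ m := this
    _ = (p:ℝ) ^ m := by norm_num
  · have h3 : (0:ℝ) < (p:ℝ) ^ d := zpow_pos hppos d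
    have h4 : (d:ℝ) ≤ -1 := by exact_mod_cast (by omega : d ≤ -1)
    have h6 : (2:ℝ) ≤ (p:ℝ) := by exact_mod_cast hp.out.two_le
    have h7 : ((p:ℝ) - 1) * (d:ℝ) ≤ ((p:ℝ) - 1) * (-1) :=
      mul_le_mul_of_nonneg_left h4 h2.le
    linarith

end Srad

section Shrink
variable {p : ℕ} [hp : Fact p.Prime] {K : Type*} [NormedField K]
  [IsUltrametricDist K] [Algebra ℚ_[p] K]
variable (hnorm : ∀ x : ℚ_[p], ‖(algebraMap ℚ_[p] K) x‖ = ‖x‖)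
include hnorm

lemma norm_choose_le (k : ℕ) (hk : k ≠ 0) (hkp : k < p) :
    ‖((p.choose k : ℕ) : K)‖ ≤ (p:ℝ)⁻¹ := by
  obtain ⟨c, hc⟩ := hp.out.dvd_choose_self hk hkp
  rw [hc]
  push_cast
  rw [norm_mul, norm_pK hnorm]
  calc (p:ℝ)⁻¹ * ‖(c:K)‖ ≤ (p:ℝ)⁻¹ * 1 := by
        apply mul_le_mul_of_nonneg_left (norm_natCast_le_one hnorm c) (by positivity)
  _ = (p:ℝ)⁻¹ := mul_one _

lemma shrink_step (x : ℝ) (hx : 0 ≤ x) (t : K) (ht : ‖t - 1‖ ≤ Srad p x) :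
    ‖t ^ (p:ℕ) - 1‖ ≤ Srad p (x - 1) := by
  set w := t - 1 with hw
  have ht1 : t = 1 + w := by rw [hw]; ring
  have hw1 : ‖w‖ ≤ 1 := le_trans ht (Srad_lt_one x).le
  have hbin : t ^ (p:ℕ) = (∑ k ∈ Finset.range p,
      w^(k+1) * (1:K)^(p-(k+1)) * ((p.choose (k+1) : ℕ) : K))
      + w^0 * (1:K)^(p-0) * ((p.choose 0 : ℕ) : K) := by
    rw [ht1, add_comm (1:K) w, add_pow, Finset.sum_range_succ']
  simp only [one_pow, pow_zero, Nat.choose_zero_right, Nat.cast_one, mul_one, one_mul] at hbin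
  have hsub : t ^ (p:ℕ) - 1 = ∑ k ∈ Finset.range p,
      w^(k+1) * ((p.choose (k+1) : ℕ) : K) := by
    rw [hbin]; ring
  rw [hsub]
  apply IsUltrametricDist.norm_sum_le_of_forall_le_of_nonneg (Srad_pos _).le
  intro k hkmem
  rw [Finset.mem_range] at hkmem
  rw [norm_mul, norm_pow]
  rcases eq_or_lt_of_le (Nat.succ_le_of_lt hkmem) with heq | hlt
  · rw [show k + 1 = p from heq, Nat.choose_self]
    simp only [Nat.cast_one, norm_one, mul_one]
    calc ‖w‖ ^ (p:ℕ) ≤ (Srad p x) ^ (p:ℕ) := pow_le_pow_left₀ (norm_nonneg _) ht _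
    _ = Srad p (x-1) := Srad_pow x
  · have h1 : ‖w‖^(k+1) ≤ ‖w‖ := pow_le_of_le_one (norm_nonneg _) hw1 (Nat.succ_ne_zero k)
    have h2 := norm_choose_le hnorm (k+1) (Nat.succ_ne_zero k) hlt
    calc ‖w‖^(k+1) * ‖((p.choose (k+1) : ℕ) : K)‖ ≤ ‖w‖ * (p:ℝ)⁻¹ :=
          mul_le_mul h1 h2 (norm_nonneg _) (norm_nonneg _)
    _ ≤ Srad p x * (p:ℝ)⁻¹ := mul_le_mul_of_nonneg_right ht (by positivity)
    _ = (p:ℝ)⁻¹ * Srad p x := mul_comm _ _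
    _ ≤ Srad p (x - 1) := Srad_inv_mul_le hx

lemma shrink_iter (n : ℕ) (t : K) (ht : ‖t - 1‖ ≤ Srad p ((n:ℝ) - 1)) :
    ‖t ^ (p^n : ℕ) - 1‖ ≤ Srad p (-1) := by
  have key : ∀ j, j ≤ n → ‖t ^ (p^j : ℕ) - 1‖ ≤ Srad p ((n:ℝ) - 1 - j) := by
    intro j
    induction j with
    | zero => intro _; simpa using ht
    | succ i ih =>
      intro hj
      have h1 := ih (by omega)
      have hx : (0:ℝ) ≤ (n:ℝ) - 1 - i := by
        have hcast : (i:ℝ) + 1 ≤ (n:ℝ) := by exact_mod_cast hj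
        linarith
      have h2 := shrink_step hnorm _ hx (t ^ (p^i : ℕ)) h1
      rw [← pow_mul, ← pow_succ] at h2
      have h4 : (n:ℝ) - 1 - (i:ℝ) - 1 = (n:ℝ) - 1 - ((i+1 : ℕ):ℝ) := by push_cast; ring
      rwa [h4] at h2
  have h5 := key n le_rfl
  have h6 : (n:ℝ) - 1 - (n:ℝ) = -1 := by ring
  rwa [h6] at h5

omit hnorm in
lemma exp_bound (n v : ℕ) :
    -(1:ℝ)/((p:ℝ)^((n:ℝ)-1) * ((p:ℝ)-1)) * ((p^v : ℕ) : ℝ) + (v:ℝ)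
      ≤ (n:ℝ) - 1 - 1/((p:ℝ)-1) := by
  have h2 : (0:ℝ) < (p:ℝ) - 1 := by linarith [hp1R (p := p)]
  have hA : (0:ℝ) < (p:ℝ) ^ ((n:ℝ)-1) := Real.rpow_pos_of_pos hppos _
  set A := (p:ℝ) ^ ((n:ℝ)-1) with hAdef
  have hm : ((p^v : ℕ) : ℝ) = (p:ℝ) ^ ((v:ℝ)) := by
    push_cast
    rw [← Real.rpow_natCast (p:ℝ) v]
  have hd := bernoulli_zpow (p := p) ((v:ℤ) - (n:ℤ) + 1)
  have hpd : (p:ℝ) ^ (((v:ℤ) - (n:ℤ) + 1 : ℤ)) = (p:ℝ) ^ ((v:ℝ)) / A := by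
    rw [← Real.rpow_intCast (p:ℝ),
      show (((v:ℤ) - (n:ℤ) + 1 : ℤ) : ℝ) = (v:ℝ) - ((n:ℝ) - 1) by push_cast; ring,
      Real.rpow_sub hppos]
  rw [hpd, show (((v:ℤ) - (n:ℤ) + 1 : ℤ) : ℝ) = (v:ℝ) - (n:ℝ) + 1 by push_cast; ring] at hd
  rw [hm]
  set P := (p:ℝ) ^ ((v:ℝ)) with hPdef
  have hP : (0:ℝ) < P := Real.rpow_pos_of_pos hppos _
  have h4 : (1 + ((p:ℝ)-1)*((v:ℝ)-(n:ℝ)+1))/((p:ℝ)-1) ≤ (P/A)/((p:ℝ)-1) := by gcongr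
  have h5 : (1 + ((p:ℝ)-1)*((v:ℝ)-(n:ℝ)+1))/((p:ℝ)-1) = 1/((p:ℝ)-1) + ((v:ℝ)-(n:ℝ)+1) := by
    field_simp
  have h6 : (P/A)/((p:ℝ)-1) = P/(A*((p:ℝ)-1)) := div_div _ _ _
  rw [h5, h6] at h4
  have h3 : -(1:ℝ)/(A*((p:ℝ)-1)) * P = -(P/(A*((p:ℝ)-1))) := by ring
  rw [h3]
  linarith

lemma norm_plog_le_disk [CompleteSpace K] (n : ℕ) (t : K)
    (ht : ‖t - 1‖ ≤ Srad p ((n:ℝ)-1)) :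
    ‖plog t‖ ≤ (p:ℝ) ^ ((n:ℝ) - 1 - 1/((p:ℝ)-1)) := by
  rw [plog_eq]
  apply IsUltrametricDist.norm_tsum_le_of_forall_le_of_nonneg
    (Real.rpow_pos_of_pos hppos _).le
  intro k
  rw [norm_lterm hnorm]
  set j := k + 1 with hjdef
  set v := padicValNat p j with hvdef
  have hpvj : p^v ≤ j := Nat.le_of_dvd (by omega) pow_padicValNat_dvd
  have h1 : ‖t-1‖^j ≤ (Srad p ((n:ℝ)-1))^j :=
    pow_le_pow_left₀ (norm_nonneg _) ht j
  have h2 : (Srad p ((n:ℝ)-1))^j ≤ (Srad p ((n:ℝ)-1))^(p^v) :=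
    pow_le_pow_of_le_one (Srad_pos _).le (Srad_lt_one _).le hpvj
  have h3 : (Srad p ((n:ℝ)-1))^((p^v : ℕ)) * (p:ℝ)^(v:ℕ)
      ≤ (p:ℝ)^((n:ℝ)-1-1/((p:ℝ)-1)) := by
    rw [Srad, ← Real.rpow_natCast ((p:ℝ) ^ (-(1:ℝ) / ((p:ℝ) ^ ((n:ℝ)-1) * ((p:ℝ) - 1)))) (p^v),
      ← Real.rpow_mul hppos.le, ← Real.rpow_natCast (p:ℝ) v, ← Real.rpow_add hppos]
    apply Real.rpow_le_rpow_of_exponent_le hp1R.le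
    exact exp_bound (p := p) n v
  calc ‖t-1‖^j * (p:ℝ)^(v:ℕ) ≤ (Srad p ((n:ℝ)-1))^(p^v) * (p:ℝ)^(v:ℕ) := by
        apply mul_le_mul_of_nonneg_right (le_trans h1 h2) (by positivity)
  _ ≤ (p:ℝ)^((n:ℝ)-1-1/((p:ℝ)-1)) := h3

end Shrink

section Surj
variable {p : ℕ} [hp : Fact p.Prime] {K : Type*} [NormedField K]
  [IsUltrametricDist K] [Algebra ℚ_[p] K] [CompleteSpace K]
variable (hnorm : ∀ x : ℚ_[p], ‖(algebraMap ℚ_[p] K) x‖ = ‖x‖)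

omit hp in
lemma norm_msprod (s : Multiset K) : ‖s.prod‖ = (s.map fun x => ‖x‖).prod := by
  induction s using Multiset.induction with
  | empty => simp
  | cons a t ih => simp [norm_mul, ih]

omit hp in
lemma multiset_prod_lt (c : ℝ) (hc : 0 ≤ c) (s : Multiset ℝ) (hs : s ≠ 0)
    (h : ∀ a ∈ s, c < a) : c ^ (Multiset.card s) < s.prod := by
  induction s using Multiset.induction with
  | empty => simp at hs
  | cons a t ih =>
    rcases eq_or_ne t 0 with rfl | ht
    · simpa using h a (by simp)
    · have h1 := ih ht (fun b hb => h b (by simp [hb]))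
      rw [Multiset.prod_cons, Multiset.card_cons, pow_succ]
      have ha := h a (by simp)
      calc c ^ Multiset.card t * c < t.prod * a :=
            mul_lt_mul'' h1 ha (pow_nonneg hc _) hc
      _ = a * t.prod := mul_comm _ _

include hnorm

lemma small_surj (hp3 : 3 ≤ p) (z : K) (hz : ‖z‖ ≤ (p:ℝ)⁻¹) :
    ∃ w : K, ‖w‖ = ‖z‖ ∧ plog (1 + w) = z := by
  have hp1 : (1:ℝ) < p := by exact_mod_cast hp.out.one_lt
  have hppos' : (0:ℝ) < p := by positivity
  have hinv : (p:ℝ)⁻¹ < 1 := by rw [inv_lt_one_iff₀]; right; exact hp1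
  have hinvnn : (0:ℝ) ≤ (p:ℝ)⁻¹ := by positivity
  set S := Metric.closedBall (0:K) ((p:ℝ)⁻¹) with hS
  have hSc : IsClosed S := Metric.isClosed_closedBall
  haveI : CompleteSpace S := hSc.completeSpace_coe
  have hmem : ∀ w : K, w ∈ S ↔ ‖w‖ ≤ (p:ℝ)⁻¹ := by
    intro w; rw [hS, mem_closedBall_zero_iff]
  -- the contraction
  have hFmem : ∀ w : S, z - (plog (1 + (w:K)) - (w:K)) ∈ S := by
    intro w
    rw [hmem]
    rw [sub_eq_add_neg]
    apply le_trans (IsUltrametricDist.norm_add_le_max _ _)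
    apply max_le hz
    rw [norm_neg]
    apply le_trans (plog_remainder hnorm hp3 (w:K) ((hmem _).mp w.2))
    calc (p:ℝ)⁻¹ * ‖(w:K)‖ ≤ 1 * (p:ℝ)⁻¹ :=
          mul_le_mul hinv.le ((hmem _).mp w.2) (norm_nonneg _) zero_le_one
    _ = (p:ℝ)⁻¹ := one_mul _
  set F : S → S := fun w => ⟨z - (plog (1 + (w:K)) - (w:K)), hFmem w⟩ with hF
  have hLip : LipschitzWith (Real.toNNReal ((p:ℝ)⁻¹)) F := by
    apply LipschitzWith.of_dist_le_mul
    intro w w'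
    rw [Subtype.dist_eq, hF]
    simp only
    rw [dist_eq_norm, show dist w w' = ‖(w:K) - (w':K)‖ from by rw [Subtype.dist_eq, dist_eq_norm]]
    have h1 : (z - (plog (1 + (w:K)) - (w:K))) - (z - (plog (1 + (w':K)) - (w':K)))
        = (plog (1 + (w':K)) - (w':K)) - (plog (1 + (w:K)) - (w:K)) := by ring
    rw [h1, Real.coe_toNNReal _ hinvnn]
    calc ‖(plog (1 + (w':K)) - (w':K)) - (plog (1 + (w:K)) - (w:K))‖
        ≤ (p:ℝ)⁻¹ * ‖(w':K) - (w:K)‖ :=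
          plog_remainder_sub hnorm hp3 _ _ ((hmem _).mp w'.2) ((hmem _).mp w.2)
    _ = (p:ℝ)⁻¹ * ‖(w:K) - (w':K)‖ := by rw [norm_sub_rev]
  have hcontr : ContractingWith (Real.toNNReal ((p:ℝ)⁻¹)) F := by
    constructor
    · rw [← Real.toNNReal_one]
      exact (Real.toNNReal_lt_toNNReal_iff one_pos).mpr hinv
    · exact hLip
  obtain ⟨y, hy, -⟩ := hcontr.exists_fixedPoint
    ⟨0, by rw [hmem]; simp⟩ (edist_ne_top _ _)
  have hyeq : plog (1 + (y:K)) = z := by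
    have := hy
    rw [Function.IsFixedPt, hF] at this
    have h2 : z - (plog (1 + (y:K)) - (y:K)) = (y:K) := congrArg Subtype.val this
    have h3 : plog (1 + (y:K)) = z := by
      have := sub_eq_iff_eq_add.mp h2
      linear_combination -this
    exact h3
  refine ⟨(y:K), ?_, hyeq⟩
  rw [← hyeq, norm_plog_eq hnorm hp3 _ ((hmem _).mp y.2)]

lemma root_approx [IsAlgClosed K] (a : K) (m : ℕ) (hm : 0 < m) (c : ℝ) (hc : 0 ≤ c)
    (h : ‖a - 1‖ ≤ c ^ m) : ∃ r : K, r ^ m = a ∧ ‖r - 1‖ ≤ c := by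
  classical
  set f : Polynomial K := Polynomial.X ^ m - Polynomial.C a with hf
  have hmonic : f.Monic := Polynomial.monic_X_pow_sub_C a (by omega)
  have hsplit : Polynomial.Splits f := IsAlgClosed.splits f
  have hprod : f = (f.roots.map fun r => Polynomial.X - Polynomial.C r).prod :=
    hsplit.eq_prod_roots_of_monic hmonic
  have hcard : Multiset.card f.roots = m := by
    rw [(Polynomial.splits_iff_card_roots).mp hsplit, hf, Polynomial.natDegree_X_pow_sub_C]
  have heval : ∀ r ∈ f.roots, r ^ m = a := by
    intro r hr
    have h0 := Polynomial.isRoot_of_mem_roots hr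
    rw [Polynomial.IsRoot, hf] at h0
    simp only [Polynomial.eval_sub, Polynomial.eval_pow, Polynomial.eval_X,
      Polynomial.eval_C] at h0
    linear_combination h0
  have hevone : ‖a - 1‖ = (f.roots.map fun r => ‖1 - r‖).prod := by
    have h1 : f.eval 1 = 1 - a := by
      rw [hf]; simp
    have h2 : f.eval 1 = (f.roots.map fun r => 1 - r).prod := by
      conv_lhs => rw [hprod]
      rw [Polynomial.eval_multiset_prod, Multiset.map_map]
      congr 1
      apply Multiset.map_congr rfl
      intro r _
      simp
    rw [← norm_sub_rev, ← h1, h2, norm_msprod, Multiset.map_map]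
    rfl
  by_contra hcon
  push_neg at hcon
  have hall : ∀ b ∈ (f.roots.map fun r => ‖1 - r‖), c < b := by
    intro b hb
    obtain ⟨r, hr, rfl⟩ := Multiset.mem_map.mp hb
    rw [norm_sub_rev]
    exact hcon r (heval r hr)
  have hne : (f.roots.map fun r => ‖1 - r‖) ≠ 0 := by
    intro h0
    have := congrArg Multiset.card h0
    rw [Multiset.card_map, hcard] at this
    simp at this
    omega
  have := multiset_prod_lt c hc _ hne hall
  rw [Multiset.card_map, hcard, ← hevone] at this
  linarith

lemma root_chain [IsAlgClosed K] (n : ℕ) (t0 : K) (h : ‖t0 - 1‖ ≤ Srad p (-1)) :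
    ∃ t : K, t ^ (p^n : ℕ) = t0 ∧ ‖t - 1‖ ≤ Srad p ((n:ℝ) - 1) := by
  induction n with
  | zero =>
    refine ⟨t0, by simp, ?_⟩
    simpa using h
  | succ n ih =>
    obtain ⟨tn, htn, htnd⟩ := ih
    have hc : (0:ℝ) ≤ Srad p ((n:ℝ)) := (Srad_pos _).le
    have hpow : (Srad p ((n:ℝ))) ^ (p:ℕ) = Srad p ((n:ℝ) - 1) := Srad_pow _
    obtain ⟨r, hr, hrd⟩ := root_approx hnorm tn p hp.out.pos (Srad p ((n:ℝ)))
      hc (by rw [hpow]; exact htnd)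
    refine ⟨r, ?_, ?_⟩
    · rw [pow_succ', pow_mul, hr, htn]
    · have : ((n+1 : ℕ):ℝ) - 1 = (n:ℝ) := by push_cast; ring
      rw [this]
      exact hrd

end Surj

section Iter
variable {p : ℕ} [hp : Fact p.Prime] {K : Type*} [NormedField K]
  [IsUltrametricDist K] [Algebra ℚ_[p] K] [CharZero K] [CompleteSpace K]
variable (hnorm : ∀ x : ℚ_[p], ‖(algebraMap ℚ_[p] K) x‖ = ‖x‖)
include hnorm

lemma plog_pow_iter (n : ℕ) (t : K) (h : ‖t - 1‖ < 1) :
    plog (t ^ (p^n : ℕ)) = ((p:K))^n * plog t := by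
  induction n with
  | zero => simp
  | succ n ih =>
    have hd : ‖t ^ (p^n : ℕ) - 1‖ < 1 := by
      have h2 := norm_one_add_pow_sub_one_le (w := t - 1) h.le (p^n)
      rw [show (1 : K) + (t - 1) = t by ring] at h2
      exact lt_of_le_of_lt h2 h
    rw [pow_succ, pow_mul, plog_pow_m hnorm p hp.out.one_lt.le (t ^ (p^n : ℕ)) hd, ih,
      pow_succ]
    ring

end Iter

section SradMore
variable {p : ℕ} [hp : Fact p.Prime]

lemma Srad_neg_one_eq : Srad p (-1) = (p:ℝ) ^ (-(1:ℝ) - 1/((p:ℝ)-1)) := by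
  have h2 : (0:ℝ) < (p:ℝ) - 1 := by linarith [hp1R (p := p)]
  have hpne : (p:ℝ) ≠ 0 := hppos.ne'
  rw [Srad]
  congr 1
  rw [Real.rpow_neg_one]
  field_simp <;> ring

lemma Srad_neg_one_le : Srad p (-1) ≤ (p:ℝ)⁻¹ := by
  have h2 : (0:ℝ) < (p:ℝ) - 1 := by linarith [hp1R (p := p)]
  rw [Srad_neg_one_eq, ← Real.rpow_neg_one (p:ℝ)]
  apply Real.rpow_le_rpow_of_exponent_le hp1R.le
  have : 0 ≤ 1/((p:ℝ)-1) := by positivity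
  linarith

end SradMore
end PlogAux


/-- Theorem `quotstructure` on points: for `t, t'` in the disk
`|t - 1| ≤ p^{-1/(p^{n-1}(p-1))}`, one has `log_p t = log_p t'` iff
`(t/t')^{p^n} = 1`; moreover `t ↦ log_p(t)/log_p(1+p)` maps this disk onto the ball
`|x| ≤ p^{n-1/(p-1)}`, identifying the quotient of the disk (a multiplicative group)
by its `p^n`-th roots of unity with that additive ball.
Here `K` plays the role of `ℂ_p`. -/
theorem statement4 (p : ℕ) [Fact p.Prime] (hodd : Odd p)
    {K : Type*} [NormedField K] [CompleteSpace K] [IsAlgClosed K] [Algebra ℚ_[p] K]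
    (hnorm : ∀ x : ℚ_[p], ‖(algebraMap ℚ_[p] K) x‖ = ‖x‖)
    (hna : ∀ x y : K, ‖x + y‖ ≤ max ‖x‖ ‖y‖)
    (n : ℕ) :
    (∀ t t' : K,
        ‖t - 1‖ ≤ (p : ℝ) ^ (-(1 : ℝ) / ((p : ℝ) ^ ((n : ℝ) - 1) * ((p : ℝ) - 1))) →
        ‖t' - 1‖ ≤ (p : ℝ) ^ (-(1 : ℝ) / ((p : ℝ) ^ ((n : ℝ) - 1) * ((p : ℝ) - 1))) →
        (plog t = plog t' ↔ (t / t') ^ (p ^ n) = 1)) ∧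
    (∀ t : K,
        ‖t - 1‖ ≤ (p : ℝ) ^ (-(1 : ℝ) / ((p : ℝ) ^ ((n : ℝ) - 1) * ((p : ℝ) - 1))) →
        ‖plog t / plog (1 + (p : K))‖ ≤ (p : ℝ) ^ ((n : ℝ) - 1 / ((p : ℝ) - 1))) ∧
    (∀ x : K, ‖x‖ ≤ (p : ℝ) ^ ((n : ℝ) - 1 / ((p : ℝ) - 1)) →
        ∃ t : K,
          ‖t - 1‖ ≤ (p : ℝ) ^ (-(1 : ℝ) / ((p : ℝ) ^ ((n : ℝ) - 1) * ((p : ℝ) - 1))) ∧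
          plog t / plog (1 + (p : K)) = x) := by
  haveI : IsUltrametricDist K :=
    IsUltrametricDist.isUltrametricDist_of_forall_norm_add_le_max_norm hna
  haveI : CharZero K := charZero_of_injective_algebraMap (algebraMap ℚ_[p] K).injective
  have hp3 : 3 ≤ p := by
    have h2 := (Fact.out : p.Prime).two_le
    rcases hodd with ⟨k, hk⟩
    omega
  have hppos' : (0:ℝ) < p := PlogAux.hppos
  have hpK : ((p:ℕ):K) ≠ 0 := Nat.cast_ne_zero.mpr (Fact.out : p.Prime).pos.ne'
  have hpKn : ((p:K))^n ≠ 0 := pow_ne_zero _ hpK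
  have hSlt1 : PlogAux.Srad p ((n:ℝ)-1) < 1 := PlogAux.Srad_lt_one _
  have hlogp : ‖plog (1 + (p:K))‖ = (p:ℝ)⁻¹ := by
    have h1 : ‖((p:ℕ):K)‖ ≤ (p:ℝ)⁻¹ := le_of_eq (PlogAux.norm_pK hnorm)
    rw [PlogAux.norm_plog_eq hnorm hp3 _ h1, PlogAux.norm_pK hnorm]
  have hlogp0 : plog (1 + (p:K)) ≠ 0 := by
    intro h0
    rw [h0, norm_zero] at hlogp
    have h2 : (0:ℝ) < (p:ℝ)⁻¹ := by positivity
    rw [← hlogp] at h2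
    exact lt_irrefl _ h2
  refine ⟨?_, ?_, ?_⟩
  · intro t t' ht ht'
    have htS : ‖t - 1‖ ≤ PlogAux.Srad p ((n:ℝ)-1) := ht
    have htS' : ‖t' - 1‖ ≤ PlogAux.Srad p ((n:ℝ)-1) := ht'
    have ht1 : ‖t - 1‖ < 1 := lt_of_le_of_lt htS hSlt1
    have ht1' : ‖t' - 1‖ < 1 := lt_of_le_of_lt htS' hSlt1
    have ht'0 : t' ≠ 0 := by
      intro h0
      rw [h0] at ht1'
      simp at ht1'
    have htpow0 : (t')^(p^n : ℕ) ≠ 0 := pow_ne_zero _ ht'0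
    constructor
    · intro h
      have h1 : plog (t ^ (p^n : ℕ)) = plog (t' ^ (p^n : ℕ)) := by
        rw [PlogAux.plog_pow_iter hnorm n t ht1, PlogAux.plog_pow_iter hnorm n t' ht1', h]
      have h2 := PlogAux.shrink_iter hnorm n t htS
      have h2' := PlogAux.shrink_iter hnorm n t' htS'
      have hle : PlogAux.Srad p (-1) ≤ (p:ℝ)⁻¹ := PlogAux.Srad_neg_one_le
      have h3 : t ^ (p^n : ℕ) - 1 = t' ^ (p^n : ℕ) - 1 := by
        apply PlogAux.plog_inj hnorm hp3 _ _ (le_trans h2 hle) (le_trans h2' hle)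
        rw [show (1:K) + (t ^ (p^n:ℕ) - 1) = t ^ (p^n:ℕ) by ring,
          show (1:K) + (t' ^ (p^n:ℕ) - 1) = t' ^ (p^n:ℕ) by ring]
        exact h1
      have h4 : t ^ (p^n : ℕ) = t' ^ (p^n : ℕ) := by linear_combination h3
      rw [div_pow, h4, div_self htpow0]
    · intro h
      rw [div_pow, div_eq_one_iff_eq htpow0] at h
      have h5 : ((p:K))^n * plog t = ((p:K))^n * plog t' := by
        rw [← PlogAux.plog_pow_iter hnorm n t ht1, ← PlogAux.plog_pow_iter hnorm n t' ht1', h]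
      exact mul_left_cancel₀ hpKn h5
  · intro t ht
    have hplog := PlogAux.norm_plog_le_disk hnorm n t ht
    rw [norm_div, hlogp, div_eq_mul_inv, inv_inv]
    calc ‖plog t‖ * (p:ℝ) ≤ (p:ℝ)^((n:ℝ)-1-1/((p:ℝ)-1)) * (p:ℝ) :=
          mul_le_mul_of_nonneg_right hplog hppos'.le
    _ = (p:ℝ)^((n:ℝ)-1/((p:ℝ)-1)) := by
          rw [← Real.rpow_add_one hppos'.ne']
          congr 1
          ring
  · intro x hx
    set y := x * plog (1 + (p:K)) with hy
    have hny : ‖y‖ ≤ (p:ℝ)^((n:ℝ)-1-1/((p:ℝ)-1)) := by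
      rw [hy, norm_mul, hlogp]
      calc ‖x‖ * (p:ℝ)⁻¹ ≤ (p:ℝ)^((n:ℝ)-1/((p:ℝ)-1)) * (p:ℝ)⁻¹ :=
            mul_le_mul_of_nonneg_right hx (by positivity)
      _ = (p:ℝ)^((n:ℝ)-1-1/((p:ℝ)-1)) := by
            rw [← Real.rpow_neg_one (p:ℝ), ← Real.rpow_add hppos']
            congr 1
            ring
    set z := ((p:K))^n * y with hz
    have hnz : ‖z‖ ≤ PlogAux.Srad p (-1) := by
      rw [hz, norm_mul, norm_pow, PlogAux.norm_pK hnorm, PlogAux.Srad_neg_one_eq]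
      calc ((p:ℝ)⁻¹)^n * ‖y‖ ≤ ((p:ℝ)⁻¹)^n * (p:ℝ)^((n:ℝ)-1-1/((p:ℝ)-1)) :=
            mul_le_mul_of_nonneg_left hny (by positivity)
      _ = (p:ℝ)^(-(1:ℝ)-1/((p:ℝ)-1)) := by
            rw [← Real.rpow_neg_one (p:ℝ), ← Real.rpow_natCast ((p:ℝ)^(-1:ℝ)) n,
              ← Real.rpow_mul hppos'.le, ← Real.rpow_add hppos']
            congr 1
            ring
    obtain ⟨w, hwn, hweq⟩ :=
      PlogAux.small_surj hnorm hp3 z (le_trans hnz PlogAux.Srad_neg_one_le)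
    have ht0 : ‖(1 + w) - 1‖ ≤ PlogAux.Srad p (-1) := by
      rw [add_sub_cancel_left, hwn]
      exact hnz
    obtain ⟨t, htpow, htd⟩ := PlogAux.root_chain hnorm n (1+w) ht0
    refine ⟨t, htd, ?_⟩
    have ht1 : ‖t - 1‖ < 1 := lt_of_le_of_lt htd hSlt1
    have h6 : ((p:K))^n * plog t = ((p:K))^n * y := by
      rw [← PlogAux.plog_pow_iter hnorm n t ht1, htpow, hweq, hz]
    have h7 : plog t = y := mul_left_cancel₀ hpKn h6
    rw [h7, hy, mul_div_assoc, div_self hlogp0, mul_one]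
end

section
/- Let p be an odd prime, R > 0 of the form p^q with q rational, and let μ, ν be bounded distributions on the Tate algebra of radius R over ℂ_p. For f in the Tate algebra and c ∈ ℂ_p with |c| ≤ R, the translate T_c f(x) = f(x + c) again lies in the Tate algebra of radius R, and the function c ↦ ν(T_c f) lies in the Tate algebra of radius R. The convolution (μ*ν)(f) = μ(c ↦ ν(T_c f)) is a well-defined bounded distribution on the Tate algebra of radius R, and its moments are given by (μ*ν)(x^k) = Σ_{m=0}^{k} binom(k,m) μ(x^m) ν(x^{k-m}) for all k ≥ 0. -/
open Filter Topology

/-- A coefficient sequence belongs to the Tate algebra of radius `R`: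
`‖a k‖ R^k → 0`. -/
def IsTate {K : Type*} [NormedField K] (R : ℝ) (a : ℕ → K) : Prop :=
  Filter.Tendsto (fun k => ‖a k‖ * R ^ k) Filter.atTop (nhds 0)

/-- The (Gauss = sup) norm on the Tate algebra of radius `R`:
`‖∑ a_k x^k‖ = sup_k ‖a_k‖ R^k`. -/
noncomputable def tateNorm {K : Type*} [NormedField K] (R : ℝ) (a : ℕ → K) : ℝ :=
  ⨆ k : ℕ, ‖a k‖ * R ^ k

/-- A bounded distribution on the Tate algebra of radius `R` over `K`: a `K`-linear
functional on the Tate algebra (identified with its coefficient sequences) that is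
bounded with respect to the Gauss norm. -/
structure BDist (K : Type*) [NormedField K] (R : ℝ) where
  toFun : {a : ℕ → K // IsTate R a} → K
  map_add' : ∀ a b c : {a : ℕ → K // IsTate R a},
    (c : ℕ → K) = (a : ℕ → K) + (b : ℕ → K) → toFun c = toFun a + toFun b
  map_smul' : ∀ (r : K) (a b : {a : ℕ → K // IsTate R a}),
    (b : ℕ → K) = r • (a : ℕ → K) → toFun b = r * toFun a
  bound' : ∃ C : ℝ, ∀ a : {a : ℕ → K // IsTate R a}, ‖toFun a‖ ≤ C * tateNorm R (a : ℕ → K)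

/-- The monomial `x^k` as an element of the Tate algebra of radius `R`. -/
noncomputable def tateMono {K : Type*} [NormedField K] (R : ℝ) (k : ℕ) :
    {a : ℕ → K // IsTate R a} :=
  ⟨fun j => if j = k then 1 else 0, by
    apply Filter.Tendsto.congr' _ tendsto_const_nhds
    filter_upwards [Filter.eventually_ge_atTop (k + 1)] with j hj
    have hjk : j ≠ k := by omega
    simp [hjk]⟩

/-- The coefficient sequence of the translate `T_c f(x) = f(x+c)` of the power
series with coefficients `a`. -/
noncomputable def tateTranslate {K : Type*} [NormedField K] (a : ℕ → K) (c : K) : ℕ → K :=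
  fun m => ∑' k : ℕ, a (m + k) * ((m + k).choose m : K) * c ^ k

section Tools
variable {K : Type*} [NormedField K]

/-- Nonarchimedean bound for finite sums. -/
lemma na_finsum_le (hna : ∀ x y : K, ‖x + y‖ ≤ max ‖x‖ ‖y‖)
    {ι : Type*} (s : Finset ι) (f : ι → K) {B : ℝ} (hB : 0 ≤ B)
    (h : ∀ i ∈ s, ‖f i‖ ≤ B) : ‖∑ i ∈ s, f i‖ ≤ B := by
  classical
  induction s using Finset.cons_induction with
  | empty => simpa using hB
  | cons a s' hx ih =>
    rw [Finset.sum_cons]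
    exact le_trans (hna _ _) (max_le (h a (Finset.mem_cons_self a s'))
      (ih fun i hi => h i (Finset.mem_cons.mpr (Or.inr hi))))

/-- In a complete nonarchimedean field, a family whose norms are eventually
small (cofinitely) is summable. -/
lemma na_summable (hna : ∀ x y : K, ‖x + y‖ ≤ max ‖x‖ ‖y‖) [CompleteSpace K]
    {ι : Type*} {f : ι → K}
    (h : ∀ ε : ℝ, 0 < ε → {i : ι | ε ≤ ‖f i‖}.Finite) : Summable f := by
  classical
  rw [summable_iff_vanishing]
  intro e he
  rcases Metric.mem_nhds_iff.mp he with ⟨ε, hε, hball⟩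
  refine ⟨(h (ε/2) (by linarith)).toFinset, fun t ht => ?_⟩
  apply hball
  simp only [Metric.mem_ball, dist_zero_right]
  have hb : ‖∑ b ∈ t, f b‖ ≤ ε/2 := by
    refine na_finsum_le hna t f (by linarith) fun i hi => ?_
    by_contra hcon
    push_neg at hcon
    refine (Finset.disjoint_left.mp ht hi) ((h (ε/2) (by linarith)).mem_toFinset.mpr ?_)
    exact hcon.le
  linarith

lemma na_summable_nat (hna : ∀ x y : K, ‖x + y‖ ≤ max ‖x‖ ‖y‖) [CompleteSpace K]
    {f : ℕ → K} (h : Filter.Tendsto (fun k => ‖f k‖) Filter.atTop (nhds 0)) : Summable f := by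
  refine na_summable hna fun ε hε => ?_
  rcases (Metric.tendsto_atTop.mp h ε hε) with ⟨N, hN⟩
  refine (Set.finite_Iio N).subset fun k hk => ?_
  by_contra hc
  simp only [Set.mem_Iio, not_lt] at hc
  have := hN k hc
  rw [Real.dist_eq, sub_zero, abs_of_nonneg (norm_nonneg _)] at this
  exact absurd hk (by simp only [Set.mem_setOf_eq, not_le]; linarith)

/-- Norm bound for tsums in nonarchimedean field. -/
lemma na_tsum_le (hna : ∀ x y : K, ‖x + y‖ ≤ max ‖x‖ ‖y‖) [CompleteSpace K]
    {ι : Type*} {f : ι → K} (hf : Summable f) {B : ℝ} (hB : 0 ≤ B)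
    (h : ∀ i, ‖f i‖ ≤ B) : ‖∑' i, f i‖ ≤ B := by
  have ht : Filter.Tendsto (fun s : Finset ι => ‖∑ i ∈ s, f i‖) Filter.atTop
      (nhds ‖∑' i, f i‖) := (continuous_norm.continuousAt).tendsto.comp hf.hasSum
  exact le_of_tendsto ht (Filter.Eventually.of_forall fun s =>
    na_finsum_le hna s f hB fun i _ => h i)

lemma isTate_zero (R : ℝ) : IsTate R (0 : ℕ → K) := by
  unfold IsTate; simpa using tendsto_const_nhds

lemma isTate_add {R : ℝ} (hR0 : 0 ≤ R) {a b : ℕ → K} (ha : IsTate R a) (hb : IsTate R b) :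
    IsTate R (a + b) := by
  unfold IsTate at *
  have h := ha.add hb
  rw [add_zero] at h
  apply squeeze_zero (fun k => by positivity) (fun k => ?_) h
  calc ‖(a + b) k‖ * R ^ k ≤ (‖a k‖ + ‖b k‖) * R ^ k := by
        apply mul_le_mul_of_nonneg_right (norm_add_le _ _) (by positivity)
    _ = ‖a k‖ * R ^ k + ‖b k‖ * R ^ k := by ring

lemma isTate_smul {R : ℝ} (r : K) {a : ℕ → K} (ha : IsTate R a) :
    IsTate R (r • a) := by
  unfold IsTate at *
  have h := ha.const_mul ‖r‖
  rw [mul_zero] at h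
  apply h.congr
  intro k
  simp only [Pi.smul_apply, smul_eq_mul, norm_mul]
  ring

lemma isTate_finsum {R : ℝ} (hR0 : 0 ≤ R) (N : ℕ)
    (e : ℕ → {a : ℕ → K // IsTate R a}) (w : ℕ → K) :
    IsTate R (∑ j ∈ Finset.range N, w j • (e j : ℕ → K)) := by
  induction N with
  | zero => simpa using isTate_zero R
  | succ n ih =>
    rw [Finset.sum_range_succ]
    exact isTate_add hR0 ih (isTate_smul _ (e n).2)

lemma tateNorm_nonneg {R : ℝ} (hR0 : 0 ≤ R) (a : ℕ → K) : 0 ≤ tateNorm R a :=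
  Real.iSup_nonneg fun k => by positivity

lemma tateNorm_le {R : ℝ} {a : ℕ → K} {B : ℝ} (hB : 0 ≤ B)
    (h : ∀ k, ‖a k‖ * R ^ k ≤ B) : tateNorm R a ≤ B := Real.iSup_le h hB

lemma le_tateNorm {R : ℝ} {a : ℕ → K} (ha : IsTate R a) (k : ℕ) :
    ‖a k‖ * R ^ k ≤ tateNorm R a :=
  le_ciSup (Filter.Tendsto.bddAbove_range ha) k

/-- Any BDist has a nonneg bound. -/
lemma BDist.bound {R : ℝ} (hR0 : 0 ≤ R) (μ : BDist K R) : ∃ C : ℝ, 0 ≤ C ∧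
    ∀ a : {a : ℕ → K // IsTate R a}, ‖μ.toFun a‖ ≤ C * tateNorm R (a : ℕ → K) := by
  rcases μ.bound' with ⟨C, hC⟩
  exact ⟨max C 0, le_max_right _ _, fun a => le_trans (hC a)
    (mul_le_mul_of_nonneg_right (le_max_left _ _) (tateNorm_nonneg hR0 _))⟩

lemma BDist.congr {R : ℝ} (μ : BDist K R) (a b : {a : ℕ → K // IsTate R a})
    (h : (a : ℕ → K) = (b : ℕ → K)) : μ.toFun a = μ.toFun b := by
  congr 1; exact Subtype.ext h

lemma BDist.map_zero {R : ℝ} (μ : BDist K R) (a : {a : ℕ → K // IsTate R a})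
    (h : (a : ℕ → K) = 0) : μ.toFun a = 0 := by
  have := μ.map_smul' 0 a a (by rw [h]; ext m; simp)
  simpa using this

/-- Finite linearity. -/
lemma BDist.map_finsum {R : ℝ} (hR0 : 0 ≤ R) (μ : BDist K R) (N : ℕ)
    (e : ℕ → {a : ℕ → K // IsTate R a}) (w : ℕ → K)
    (s : {a : ℕ → K // IsTate R a})
    (hs : (s : ℕ → K) = ∑ j ∈ Finset.range N, w j • (e j : ℕ → K)) :
    μ.toFun s = ∑ j ∈ Finset.range N, w j * μ.toFun (e j) := by
  induction N generalizing s with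
  | zero => simpa using μ.map_zero s (by simpa using hs)
  | succ n ih =>
    rw [Finset.sum_range_succ] at hs
    rw [μ.map_add' ⟨_, isTate_finsum hR0 n e w⟩ ⟨_, isTate_smul (w n) (e n).2⟩ s hs,
      Finset.sum_range_succ, ih ⟨_, isTate_finsum hR0 n e w⟩ rfl,
      μ.map_smul' (w n) (e n) ⟨_, isTate_smul (w n) (e n).2⟩ rfl]

end Tools
/-- The `k`-th "shift" coefficient sequence: `m ↦ a(m+k) * C(m+k, m)`, so that
`tateTranslate a c m = ∑' k, tateShift a k m * c^k`. -/
noncomputable def tateShift {K : Type*} [NormedField K] (a : ℕ → K) (k : ℕ) : ℕ → K :=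
  fun m => a (m + k) * ((m + k).choose m : K)

section Shift
variable {K : Type*} [NormedField K] {R : ℝ}

lemma shift_coeff_le (hR0 : 0 < R) (hone : ∀ n : ℕ, ‖(n : K)‖ ≤ 1)
    (a : ℕ → K) (k m : ℕ) :
    ‖tateShift a k m‖ * (R ^ m * R ^ k) ≤ ‖a (m + k)‖ * R ^ (m + k) := by
  have h1 : ‖tateShift a k m‖ ≤ ‖a (m + k)‖ := by
    rw [tateShift, norm_mul]
    calc ‖a (m+k)‖ * ‖((m+k).choose m : K)‖ ≤ ‖a (m+k)‖ * 1 :=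
        mul_le_mul_of_nonneg_left (hone _) (norm_nonneg _)
      _ = ‖a (m+k)‖ := mul_one _
  calc ‖tateShift a k m‖ * (R ^ m * R ^ k) ≤ ‖a (m+k)‖ * (R ^ m * R ^ k) :=
      mul_le_mul_of_nonneg_right h1 (by positivity)
    _ = ‖a (m+k)‖ * R ^ (m + k) := by rw [pow_add]

lemma shift_term_le (hR0 : 0 < R) (hone : ∀ n : ℕ, ‖(n : K)‖ ≤ 1)
    (a : ℕ → K) {c : K} (hc : ‖c‖ ≤ R) (k m : ℕ) :
    ‖tateShift a k m * c ^ k‖ * R ^ m ≤ ‖a (m + k)‖ * R ^ (m + k) := by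
  refine le_trans ?_ (shift_coeff_le hR0 hone a k m)
  rw [norm_mul, norm_pow]
  have h2 : ‖c‖ ^ k ≤ R ^ k := pow_le_pow_left₀ (norm_nonneg _) hc k
  calc ‖tateShift a k m‖ * ‖c‖ ^ k * R ^ m ≤ ‖tateShift a k m‖ * R ^ k * R ^ m := by
        apply mul_le_mul_of_nonneg_right (mul_le_mul_of_nonneg_left h2 (norm_nonneg _))
          (by positivity)
    _ = ‖tateShift a k m‖ * (R ^ m * R ^ k) := by ring

/-- The series defining `tateTranslate` is summable. -/
lemma translate_summable (hR0 : 0 < R) (hna : ∀ x y : K, ‖x + y‖ ≤ max ‖x‖ ‖y‖)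
    (hone : ∀ n : ℕ, ‖(n : K)‖ ≤ 1) [CompleteSpace K]
    {a : ℕ → K} (ha : IsTate R a) {c : K} (hc : ‖c‖ ≤ R) (m : ℕ) :
    Summable (fun k => a (m + k) * ((m + k).choose m : K) * c ^ k) := by
  apply na_summable_nat hna
  have key : ∀ k, ‖a (m + k) * ((m + k).choose m : K) * c ^ k‖ ≤
      (‖a (m + k)‖ * R ^ (m + k)) / R ^ m := by
    intro k
    rw [le_div_iff₀ (by positivity)]
    exact shift_term_le hR0 hone a hc k m
  have hlim : Filter.Tendsto (fun k => (‖a (m + k)‖ * R ^ (m + k)) / R ^ m)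
      Filter.atTop (nhds 0) := by
    have := (ha.comp (Filter.tendsto_add_atTop_nat m)).div_const (R ^ m)
    rw [zero_div] at this
    exact this.congr fun k => by simp [Function.comp, Nat.add_comm]
  exact squeeze_zero (fun k => norm_nonneg _) key hlim

/-- Uniform bound on translate coefficients from a tail bound on `a`. -/
lemma translate_coeff_le (hR0 : 0 < R) (hna : ∀ x y : K, ‖x + y‖ ≤ max ‖x‖ ‖y‖)
    (hone : ∀ n : ℕ, ‖(n : K)‖ ≤ 1) [CompleteSpace K]
    {a : ℕ → K} (ha : IsTate R a) {c : K} (hc : ‖c‖ ≤ R) (m : ℕ)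
    {B : ℝ} (hB : 0 ≤ B) (h : ∀ j, m ≤ j → ‖a j‖ * R ^ j ≤ B) :
    ‖tateTranslate a c m‖ * R ^ m ≤ B := by
  rw [← le_div_iff₀ (by positivity : (0:ℝ) < R ^ m)]
  refine na_tsum_le hna (translate_summable hR0 hna hone ha hc m) (by positivity) fun k => ?_
  rw [le_div_iff₀ (by positivity : (0:ℝ) < R ^ m)]
  refine le_trans (shift_term_le hR0 hone a hc k m) (h (m + k) (Nat.le_add_right m k))

/-- The translate of a Tate series is Tate. -/
lemma isTate_translate (hR0 : 0 < R) (hna : ∀ x y : K, ‖x + y‖ ≤ max ‖x‖ ‖y‖)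
    (hone : ∀ n : ℕ, ‖(n : K)‖ ≤ 1) [CompleteSpace K]
    {a : ℕ → K} (ha : IsTate R a) {c : K} (hc : ‖c‖ ≤ R) :
    IsTate R (tateTranslate a c) := by
  rw [IsTate, Metric.tendsto_atTop]
  intro ε hε
  rcases Metric.tendsto_atTop.mp ha (ε/2) (by linarith) with ⟨N, hN⟩
  refine ⟨N, fun m hm => ?_⟩
  have hb : ‖tateTranslate a c m‖ * R ^ m ≤ ε/2 := by
    refine translate_coeff_le hR0 hna hone ha hc m (by linarith) fun j hj => ?_
    have := hN j (le_trans hm hj)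
    rw [Real.dist_eq, sub_zero] at this
    exact le_of_lt (lt_of_abs_lt this)
  rw [Real.dist_eq, sub_zero, abs_of_nonneg (by positivity)]
  linarith

/-- Each shift of a Tate series is Tate. -/
lemma isTate_shift (hR0 : 0 < R) (hone : ∀ n : ℕ, ‖(n : K)‖ ≤ 1)
    {a : ℕ → K} (ha : IsTate R a) (k : ℕ) : IsTate R (tateShift a k) := by
  have key : ∀ m, ‖tateShift a k m‖ * R ^ m ≤ (‖a (m + k)‖ * R ^ (m + k)) / R ^ k := by
    intro m
    rw [le_div_iff₀ (by positivity)]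
    calc ‖tateShift a k m‖ * R ^ m * R ^ k = ‖tateShift a k m‖ * (R ^ m * R ^ k) := by ring
      _ ≤ ‖a (m + k)‖ * R ^ (m + k) := shift_coeff_le hR0 hone a k m
  have hlim : Filter.Tendsto (fun m => (‖a (m + k)‖ * R ^ (m + k)) / R ^ k)
      Filter.atTop (nhds 0) := by
    have := (ha.comp (Filter.tendsto_add_atTop_nat k)).div_const (R ^ k)
    rw [zero_div] at this
    exact this.congr fun m => by simp [Function.comp]
  exact squeeze_zero (fun m => by positivity) key hlim

/-- Gauss norm of the shift from a tail bound. -/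
lemma tateNorm_shift_le (hR0 : 0 < R) (hone : ∀ n : ℕ, ‖(n : K)‖ ≤ 1)
    (a : ℕ → K) (k : ℕ) {B : ℝ} (hB : 0 ≤ B) (h : ∀ j, k ≤ j → ‖a j‖ * R ^ j ≤ B) :
    tateNorm R (tateShift a k) ≤ B / R ^ k := by
  refine tateNorm_le (by positivity) fun m => ?_
  rw [le_div_iff₀ (by positivity : (0:ℝ) < R ^ k)]
  calc ‖tateShift a k m‖ * R ^ m * R ^ k = ‖tateShift a k m‖ * (R ^ m * R ^ k) := by ring
    _ ≤ ‖a (m + k)‖ * R ^ (m + k) := shift_coeff_le hR0 hone a k m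
    _ ≤ B := h (m + k) (Nat.le_add_left k m)

end Shift
section Rep
set_option maxHeartbeats 1000000
variable {K : Type*} [NormedField K] {R : ℝ} [CompleteSpace K]

/-- `ν` of the translate is computed by the power series with coefficients
`ν(tateShift a k)`. -/
lemma rep_hasSum (hR0 : 0 < R) (hna : ∀ x y : K, ‖x + y‖ ≤ max ‖x‖ ‖y‖)
    (hone : ∀ n : ℕ, ‖(n : K)‖ ≤ 1) (ν : BDist K R)
    {a : ℕ → K} (ha : IsTate R a) {c : K} (hc : ‖c‖ ≤ R)
    (hT : IsTate R (tateTranslate a c)) :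
    HasSum (fun k => ν.toFun ⟨tateShift a k, isTate_shift hR0 hone ha k⟩ * c ^ k)
      (ν.toFun ⟨tateTranslate a c, hT⟩) := by
  obtain ⟨C, hC0, hC⟩ := ν.bound hR0.le
  set e : ℕ → {b : ℕ → K // IsTate R b} :=
    fun k => ⟨tateShift a k, isTate_shift hR0 hone ha k⟩ with he
  set g : ℕ → K := fun k => ν.toFun (e k) with hg
  -- tail bound machinery
  have tail : ∀ ε : ℝ, 0 < ε → ∃ N : ℕ, ∀ j, N ≤ j → ‖a j‖ * R ^ j ≤ ε := by
    intro ε hε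
    rcases Metric.tendsto_atTop.mp ha ε hε with ⟨N, hN⟩
    refine ⟨N, fun j hj => ?_⟩
    have := hN j hj
    rw [Real.dist_eq, sub_zero] at this
    exact (lt_of_abs_lt this).le
  -- (i) summability of the coefficient series
  have gsum : Summable (fun k => g k * c ^ k) := by
    apply na_summable_nat hna
    rw [Metric.tendsto_atTop]
    intro ε hε
    have hε' : 0 < ε / (2 * (C + 1)) := by positivity
    rcases tail _ hε' with ⟨N, hN⟩
    refine ⟨N, fun k hk => ?_⟩
    have h1 : tateNorm R (tateShift a k) ≤ (ε / (2 * (C + 1))) / R ^ k :=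
      tateNorm_shift_le hR0 hone a k hε'.le fun j hj => hN j (le_trans hk hj)
    have h2 : ‖g k * c ^ k‖ ≤ C * (ε / (2 * (C + 1))) := by
      rw [norm_mul, norm_pow]
      calc ‖g k‖ * ‖c‖ ^ k ≤ (C * ((ε / (2 * (C + 1))) / R ^ k)) * R ^ k := by
            apply mul_le_mul (le_trans (hC (e k)) (mul_le_mul_of_nonneg_left h1 hC0))
              (pow_le_pow_left₀ (norm_nonneg _) hc k) (by positivity) (by positivity)
        _ = C * (ε / (2 * (C + 1))) := by field_simp
    have hkey : (C + 1) * (ε / (2 * (C + 1))) = ε / 2 := by field_simp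
    have h3 : C * (ε / (2 * (C + 1))) < ε := by
      have h5 := mul_le_mul_of_nonneg_right (by linarith : C ≤ C + 1) hε'.le
      linarith
    rw [Real.dist_eq, sub_zero, abs_of_nonneg (norm_nonneg _)]
    linarith
  -- (ii)+(iii)+(iv): partial sums converge to ν(translate)
  have htend : Filter.Tendsto (fun N => ∑ k ∈ Finset.range N, g k * c ^ k)
      Filter.atTop (nhds (ν.toFun ⟨tateTranslate a c, hT⟩)) := by
    rw [Metric.tendsto_atTop]
    intro ε hε
    have hε' : 0 < ε / (2 * (C + 1)) := by positivity
    rcases tail _ hε' with ⟨N0, hN0⟩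
    refine ⟨N0, fun N hN => ?_⟩
    -- the tail-difference element
    set D : ℕ → K := fun m => ∑' k : ℕ,
      a (m + (k + N)) * ((m + (k + N)).choose m : K) * c ^ (k + N) with hD
    have hsplit : tateTranslate a c =
        (∑ k ∈ Finset.range N, (c ^ k) • (tateShift a k : ℕ → K)) + D := by
      funext m
      have hsummable := translate_summable hR0 hna hone ha hc m
      have := Summable.sum_add_tsum_nat_add (f := fun k => a (m + k) * ((m + k).choose m : K) * c ^ k)
        N hsummable
      show (∑' k : ℕ, a (m + k) * ((m + k).choose m : K) * c ^ k) = _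
      rw [← this]
      simp only [Pi.add_apply, Finset.sum_apply, Pi.smul_apply, smul_eq_mul]
      congr 1
      refine Finset.sum_congr rfl fun k _ => ?_
      simp only [tateShift]
      ring
    have hDTate : IsTate R D := by
      have h1 : D = tateTranslate a c +
          (-1 : K) • (∑ k ∈ Finset.range N, (c ^ k) • (tateShift a k : ℕ → K)) := by
        rw [hsplit]; funext m; simp
      rw [h1]
      exact isTate_add hR0.le hT (isTate_smul _ (isTate_finsum hR0.le N e (fun k => c ^ k)))
    have hDnorm : tateNorm R D ≤ ε / (2 * (C + 1)) := by
      refine tateNorm_le hε'.le fun m => ?_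
      rw [← le_div_iff₀ (by positivity : (0:ℝ) < R ^ m)]
      refine na_tsum_le hna ?_ (by positivity) fun k => ?_
      · exact (summable_nat_add_iff N).mpr (translate_summable hR0 hna hone ha hc m)
      · rw [le_div_iff₀ (by positivity : (0:ℝ) < R ^ m)]
        refine le_trans (shift_term_le hR0 hone a hc (k + N) m) ?_
        exact hN0 (m + (k + N)) (by omega)
    have hadd : ν.toFun ⟨tateTranslate a c, hT⟩ =
        ν.toFun ⟨_, isTate_finsum hR0.le N e (fun k => c ^ k)⟩ + ν.toFun ⟨D, hDTate⟩ :=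
      ν.map_add' _ _ _ hsplit
    have hpart : ν.toFun ⟨_, isTate_finsum hR0.le N e (fun k => c ^ k)⟩ =
        ∑ k ∈ Finset.range N, g k * c ^ k := by
      rw [ν.map_finsum hR0.le N e (fun k => c ^ k) _ rfl]
      exact Finset.sum_congr rfl fun k _ => mul_comm _ _
    have hDbound : ‖ν.toFun ⟨D, hDTate⟩‖ ≤ C * (ε / (2 * (C + 1))) :=
      le_trans (hC _) (mul_le_mul_of_nonneg_left hDnorm hC0)
    have hkey : (C + 1) * (ε / (2 * (C + 1))) = ε / 2 := by field_simp
    have h3 : C * (ε / (2 * (C + 1))) < ε := by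
      have h5 := mul_le_mul_of_nonneg_right (by linarith : C ≤ C + 1) hε'.le
      linarith
    rw [dist_eq_norm]
    have : ∑ k ∈ Finset.range N, g k * c ^ k - ν.toFun ⟨tateTranslate a c, hT⟩ =
        -ν.toFun ⟨D, hDTate⟩ := by rw [hadd, hpart]; ring
    rw [this, norm_neg]
    exact lt_of_le_of_lt hDbound h3
  have h1 := gsum.hasSum
  have h2 := h1.tendsto_sum_nat
  rwa [tendsto_nhds_unique h2 htend] at h1
end Rep
section Unique
set_option maxHeartbeats 1000000
variable {K : Type*} [NormedField K] {R : ℝ} [CompleteSpace K]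

lemma shifted_summable (hR0 : 0 < R) (hna : ∀ x y : K, ‖x + y‖ ≤ max ‖x‖ ‖y‖)
    {d : ℕ → K} (hd : IsTate R d) {c : K} (hc : ‖c‖ ≤ R) (j : ℕ) :
    Summable (fun m => d (m + j) * c ^ m) := by
  apply na_summable_nat hna
  have key : ∀ m, ‖d (m + j) * c ^ m‖ ≤ (‖d (m + j)‖ * R ^ (m + j)) / R ^ j := by
    intro m
    rw [le_div_iff₀ (by positivity), norm_mul, norm_pow]
    calc ‖d (m + j)‖ * ‖c‖ ^ m * R ^ j ≤ ‖d (m + j)‖ * R ^ m * R ^ j := by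
          apply mul_le_mul_of_nonneg_right (mul_le_mul_of_nonneg_left
            (pow_le_pow_left₀ (norm_nonneg _) hc m) (norm_nonneg _)) (by positivity)
      _ = ‖d (m + j)‖ * R ^ (m + j) := by rw [pow_add]; ring
  have hlim : Filter.Tendsto (fun m => (‖d (m + j)‖ * R ^ (m + j)) / R ^ j)
      Filter.atTop (nhds 0) := by
    have := (hd.comp (Filter.tendsto_add_atTop_nat j)).div_const (R ^ j)
    rw [zero_div] at this
    exact this.congr fun m => by simp [Function.comp]
  exact squeeze_zero (fun m => norm_nonneg _) key hlim

lemma eval_zero {d : ℕ → K} (j : ℕ) : ∑' m : ℕ, d (m + j) * (0 : K) ^ m = d j := by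
  rw [tsum_eq_single 0 (fun m hm => by simp [zero_pow hm])]
  simp

lemma shift_identity (hR0 : 0 < R) (hna : ∀ x y : K, ‖x + y‖ ≤ max ‖x‖ ‖y‖)
    {d : ℕ → K} (hd : IsTate R d) {c : K} (hc : ‖c‖ ≤ R) (j : ℕ) :
    ∑' m : ℕ, d (m + j) * c ^ m = d j + c * ∑' m : ℕ, d (m + (j + 1)) * c ^ m := by
  rw [Summable.tsum_eq_zero_add (shifted_summable hR0 hna hd hc j)]
  simp only [zero_add, pow_zero, mul_one]
  congr 1
  rw [← tsum_mul_left]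
  apply tsum_congr
  intro m
  have hidx : m + 1 + j = m + (j + 1) := by omega
  rw [hidx]; ring

lemma coeff_unique (hR0 : 0 < R) (hna : ∀ x y : K, ‖x + y‖ ≤ max ‖x‖ ‖y‖)
    (hsmall : ∀ ε : ℝ, 0 < ε → ∃ c : K, c ≠ 0 ∧ ‖c‖ ≤ R ∧ ‖c‖ < ε)
    {d : ℕ → K} (hd : IsTate R d)
    (h : ∀ c : K, ‖c‖ ≤ R → ∑' m : ℕ, d m * c ^ m = 0) : ∀ j, d j = 0 := by
  have h0R : ‖(0 : K)‖ ≤ R := by simp [hR0.le]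
  have P : ∀ j, ∀ c : K, ‖c‖ ≤ R → ∑' m : ℕ, d (m + j) * c ^ m = 0 := by
    intro j
    induction j with
    | zero => intro c hc; simpa using h c hc
    | succ n ih =>
      have hdn : d n = 0 := by have := ih 0 h0R; rwa [eval_zero] at this
      have hTzero : ∀ c : K, ‖c‖ ≤ R → c ≠ 0 → ∑' m : ℕ, d (m + (n + 1)) * c ^ m = 0 := by
        intro c hc hc0
        have hih := ih c hc
        rw [shift_identity hR0 hna hd hc n, hdn, zero_add] at hih
        exact (mul_eq_zero.mp hih).resolve_left hc0
      have hBnn : 0 ≤ tateNorm R d / R ^ (n + 1 + 1) :=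
        div_nonneg (tateNorm_nonneg hR0.le d) (by positivity)
      have hB : ∀ c : K, ‖c‖ ≤ R →
          ‖∑' m : ℕ, d (m + (n + 1 + 1)) * c ^ m‖ ≤ tateNorm R d / R ^ (n + 1 + 1) := by
        intro c hc
        refine na_tsum_le hna (shifted_summable hR0 hna hd hc (n + 1 + 1)) hBnn fun m => ?_
        rw [le_div_iff₀ (by positivity), norm_mul, norm_pow]
        calc ‖d (m + (n+1+1))‖ * ‖c‖ ^ m * R ^ (n+1+1)
            ≤ ‖d (m + (n+1+1))‖ * R ^ m * R ^ (n+1+1) := by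
              apply mul_le_mul_of_nonneg_right (mul_le_mul_of_nonneg_left
                (pow_le_pow_left₀ (norm_nonneg _) hc m) (norm_nonneg _)) (by positivity)
          _ = ‖d (m + (n+1+1))‖ * R ^ (m + (n+1+1)) := by rw [pow_add]; ring
          _ ≤ tateNorm R d := le_tateNorm hd _
      have hdn1 : d (n + 1) = 0 := by
        by_contra hne
        have hdpos : 0 < ‖d (n + 1)‖ := norm_pos_iff.mpr hne
        obtain ⟨c, hc0, hcR, hcs⟩ := hsmall
          (‖d (n + 1)‖ / (tateNorm R d / R ^ (n + 1 + 1) + 1)) (by positivity)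
        have h1 := hTzero c hcR hc0
        rw [shift_identity hR0 hna hd hcR (n + 1)] at h1
        have h2 : d (n + 1) = -(c * ∑' m : ℕ, d (m + (n + 1 + 1)) * c ^ m) :=
          eq_neg_of_add_eq_zero_left h1
        have h3 : ‖d (n + 1)‖ ≤ ‖c‖ * (tateNorm R d / R ^ (n + 1 + 1)) := by
          rw [h2, norm_neg, norm_mul]
          exact mul_le_mul_of_nonneg_left (hB c hcR) (norm_nonneg _)
        have h4 : ‖c‖ * (tateNorm R d / R ^ (n + 1 + 1)) < ‖d (n + 1)‖ := by
          calc ‖c‖ * (tateNorm R d / R ^ (n + 1 + 1))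
              ≤ ‖c‖ * (tateNorm R d / R ^ (n + 1 + 1) + 1) := by
                apply mul_le_mul_of_nonneg_left (by linarith) (norm_nonneg _)
            _ < (‖d (n + 1)‖ / (tateNorm R d / R ^ (n + 1 + 1) + 1)) *
                (tateNorm R d / R ^ (n + 1 + 1) + 1) :=
                mul_lt_mul_of_pos_right hcs (by linarith)
            _ = ‖d (n + 1)‖ := div_mul_cancel₀ _
                (ne_of_gt (by linarith : (0:ℝ) < tateNorm R d / R ^ (n + 1 + 1) + 1))
        linarith
      intro c hc
      by_cases hc0 : c = 0
      · rw [hc0, eval_zero]; exact hdn1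
      · exact hTzero c hc hc0
  intro j
  have := P j 0 h0R
  rwa [eval_zero] at this

end Unique
section Binom
set_option maxHeartbeats 1000000
variable {K : Type*} [NormedField K] {R : ℝ} [CompleteSpace K]

lemma translate_eval (hR0 : 0 < R) (hna : ∀ x y : K, ‖x + y‖ ≤ max ‖x‖ ‖y‖)
    (hone : ∀ n : ℕ, ‖(n : K)‖ ≤ 1)
    {a : ℕ → K} (ha : IsTate R a) {c : K} (hc : ‖c‖ ≤ R) {x : K} (hx : ‖x‖ ≤ R) :
    ∑' m : ℕ, tateTranslate a c m * x ^ m = ∑' k : ℕ, a k * (x + c) ^ k := by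
  classical
  set F : ℕ × ℕ → K := fun p => (tateShift a p.2 p.1 * c ^ p.2) * x ^ p.1 with hF
  set G : ℕ × ℕ → K := fun p => if p.2 ≤ p.1 then
    a p.1 * ((p.1).choose p.2 : K) * x ^ p.2 * c ^ (p.1 - p.2) else 0 with hG
  have tail : ∀ ε : ℝ, 0 < ε → ∃ N : ℕ, ∀ j, N ≤ j → ‖a j‖ * R ^ j < ε := by
    intro ε hε
    rcases Metric.tendsto_atTop.mp ha ε hε with ⟨N, hN⟩
    refine ⟨N, fun j hj => ?_⟩
    have := hN j hj
    rw [Real.dist_eq, sub_zero] at this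
    exact lt_of_abs_lt this
  have hFle : ∀ p : ℕ × ℕ, ‖F p‖ ≤ ‖a (p.1 + p.2)‖ * R ^ (p.1 + p.2) := by
    rintro ⟨m, k⟩
    have hFn : ‖F (m, k)‖ = ‖tateShift a k m * c ^ k‖ * ‖x‖ ^ m := by
      rw [hF, norm_mul, norm_pow]
    rw [hFn]
    calc ‖tateShift a k m * c ^ k‖ * ‖x‖ ^ m ≤ ‖tateShift a k m * c ^ k‖ * R ^ m := by
          apply mul_le_mul_of_nonneg_left (pow_le_pow_left₀ (norm_nonneg _) hx m)
            (norm_nonneg _)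
      _ ≤ ‖a (m + k)‖ * R ^ (m + k) := shift_term_le hR0 hone a hc k m
  have hFs : Summable F := by
    apply na_summable hna
    intro ε hε
    rcases tail ε hε with ⟨N, hN⟩
    refine ((Set.finite_Iio N).prod (Set.finite_Iio N)).subset ?_
    rintro ⟨m, k⟩ hp
    simp only [Set.mem_setOf_eq] at hp
    have h1 : m + k < N := by
      by_contra hcon
      push_neg at hcon
      have := lt_of_le_of_lt (le_trans hp (hFle (m, k))) (hN _ hcon)
      exact lt_irrefl _ this
    exact ⟨by simp only [Set.mem_Iio]; omega, by simp only [Set.mem_Iio]; omega⟩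
  -- injection (m,k) ↦ (m+k, m)
  set ι : ℕ × ℕ → ℕ × ℕ := fun p => (p.1 + p.2, p.1) with hι
  have hinj : Function.Injective ι := by
    rintro ⟨m, k⟩ ⟨m', k'⟩ h
    simp only [hι, Prod.mk.injEq] at h
    exact Prod.ext (by omega) (by omega)
  have hGι : ∀ p : ℕ × ℕ, G (ι p) = F p := by
    rintro ⟨m, k⟩
    simp only [hι, hG, hF, tateShift]
    rw [if_pos (by omega : m ≤ m + k)]
    have h1 : m + k - m = k := by omega
    rw [h1]; ring
  have hsupp : ∀ p : ℕ × ℕ, p ∉ Set.range ι → G p = 0 := by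
    rintro ⟨n, m⟩ hp
    by_contra hne
    have hmn : m ≤ n := by
      by_contra hc2
      exact hne (if_neg hc2)
    exact hp ⟨(m, n - m), Prod.ext (by simp [hι]; omega) rfl⟩
  have hGs : Summable G :=
    (hinj.summable_iff hsupp).mp ((summable_congr fun p => (hGι p)).mpr hFs)
  have step1 : ∑' m : ℕ, tateTranslate a c m * x ^ m = ∑' p : ℕ × ℕ, F p := by
    rw [Summable.tsum_prod' hFs fun m => hFs.prod_factor m]
    apply tsum_congr
    intro m
    show (∑' k : ℕ, a (m + k) * ((m + k).choose m : K) * c ^ k) * x ^ m = _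
    rw [← tsum_mul_right]
    exact tsum_congr fun k => rfl
  have step2 : ∑' p : ℕ × ℕ, F p = ∑' p : ℕ × ℕ, G p := by
    rw [← hinj.tsum_eq (f := G) (Function.support_subset_iff'.mpr hsupp)]
    exact tsum_congr fun p => (hGι p).symm
  have step3 : ∑' p : ℕ × ℕ, G p = ∑' k : ℕ, a k * (x + c) ^ k := by
    rw [Summable.tsum_prod' hGs fun n => hGs.prod_factor n]
    apply tsum_congr
    intro n
    rw [tsum_eq_sum (s := Finset.range (n + 1))
      (fun m hm => by simp only [hG]; rw [if_neg]; simp at hm; omega)]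
    rw [add_pow, Finset.mul_sum]
    apply Finset.sum_congr rfl
    intro m hm
    simp only [hG]
    rw [if_pos (by simp at hm; omega : m ≤ n)]
    ring
  rw [step1, step2, step3]

end Binom
section Conv
set_option maxHeartbeats 1000000
variable {K : Type*} [NormedField K] {R : ℝ} [CompleteSpace K]

lemma gIsTate (hR0 : 0 < R) (hna : ∀ x y : K, ‖x + y‖ ≤ max ‖x‖ ‖y‖)
    (hone : ∀ n : ℕ, ‖(n : K)‖ ≤ 1) (ν : BDist K R)
    {a : ℕ → K} (ha : IsTate R a) :
    IsTate R (fun k => ν.toFun ⟨tateShift a k, isTate_shift hR0 hone ha k⟩) := by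
  obtain ⟨C, hC0, hC⟩ := ν.bound hR0.le
  rw [IsTate, Metric.tendsto_atTop]
  intro ε hε
  have hε' : 0 < ε / (2 * (C + 1)) := by positivity
  rcases Metric.tendsto_atTop.mp ha _ hε' with ⟨N, hN⟩
  refine ⟨N, fun k hk => ?_⟩
  have htail : ∀ j, k ≤ j → ‖a j‖ * R ^ j ≤ ε / (2 * (C + 1)) := by
    intro j hj
    have := hN j (le_trans hk hj)
    rw [Real.dist_eq, sub_zero] at this
    exact (lt_of_abs_lt this).le
  have h1 : tateNorm R (tateShift a k) ≤ (ε / (2 * (C + 1))) / R ^ k :=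
    tateNorm_shift_le hR0 hone a k hε'.le htail
  have h2 : ‖ν.toFun ⟨tateShift a k, isTate_shift hR0 hone ha k⟩‖ * R ^ k ≤
      C * (ε / (2 * (C + 1))) := by
    calc ‖ν.toFun ⟨tateShift a k, isTate_shift hR0 hone ha k⟩‖ * R ^ k
        ≤ (C * ((ε / (2 * (C + 1))) / R ^ k)) * R ^ k := by
          apply mul_le_mul_of_nonneg_right (le_trans (hC _)
            (mul_le_mul_of_nonneg_left h1 hC0)) (by positivity)
      _ = C * (ε / (2 * (C + 1))) := by field_simp
  have hkey : (C + 1) * (ε / (2 * (C + 1))) = ε / 2 := by field_simp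
  have h3 : C * (ε / (2 * (C + 1))) < ε := by
    have h5 := mul_le_mul_of_nonneg_right (by linarith : C ≤ C + 1) hε'.le
    linarith
  rw [Real.dist_eq, sub_zero, abs_of_nonneg (by positivity)]
  linarith

/-- The convolution of two bounded distributions. -/
noncomputable def convDist (hR0 : 0 < R) (hna : ∀ x y : K, ‖x + y‖ ≤ max ‖x‖ ‖y‖)
    (hone : ∀ n : ℕ, ‖(n : K)‖ ≤ 1) (μ ν : BDist K R) : BDist K R where
  toFun s := μ.toFun ⟨fun k => ν.toFun ⟨tateShift s.1 k, isTate_shift hR0 hone s.2 k⟩,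
    gIsTate hR0 hna hone ν s.2⟩
  map_add' a b s hs := by
    apply μ.map_add'
    funext k
    simp only [Pi.add_apply]
    apply ν.map_add'
    funext m
    simp only [Pi.add_apply, tateShift, hs]
    ring
  map_smul' r a b hb := by
    apply μ.map_smul'
    funext k
    simp only [Pi.smul_apply, smul_eq_mul]
    apply ν.map_smul'
    funext m
    simp only [Pi.smul_apply, smul_eq_mul, tateShift, hb]
    ring
  bound' := by
    obtain ⟨Cμ, hCμ0, hCμ⟩ := μ.bound hR0.le
    obtain ⟨Cν, hCν0, hCν⟩ := ν.bound hR0.le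
    refine ⟨Cμ * Cν, fun s => ?_⟩
    have hg : tateNorm R (fun k => ν.toFun ⟨tateShift s.1 k, isTate_shift hR0 hone s.2 k⟩)
        ≤ Cν * tateNorm R s.1 := by
      refine tateNorm_le (mul_nonneg hCν0 (tateNorm_nonneg hR0.le _)) fun k => ?_
      have h1 : tateNorm R (tateShift s.1 k) ≤ tateNorm R s.1 / R ^ k :=
        tateNorm_shift_le hR0 hone s.1 k (tateNorm_nonneg hR0.le _)
          (fun j _ => le_tateNorm s.2 j)
      calc ‖ν.toFun ⟨tateShift s.1 k, isTate_shift hR0 hone s.2 k⟩‖ * R ^ k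
          ≤ (Cν * (tateNorm R s.1 / R ^ k)) * R ^ k := by
            apply mul_le_mul_of_nonneg_right (le_trans (hCν _)
              (mul_le_mul_of_nonneg_left h1 hCν0)) (by positivity)
        _ = Cν * tateNorm R s.1 := by field_simp
    calc ‖μ.toFun ⟨fun k => ν.toFun ⟨tateShift s.1 k, isTate_shift hR0 hone s.2 k⟩,
          gIsTate hR0 hna hone ν s.2⟩‖
        ≤ Cμ * tateNorm R (fun k => ν.toFun ⟨tateShift s.1 k, isTate_shift hR0 hone s.2 k⟩) :=
          hCμ _
      _ ≤ Cμ * (Cν * tateNorm R s.1) := mul_le_mul_of_nonneg_left hg hCμ0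
      _ = (Cμ * Cν) * tateNorm R s.1 := by ring

end Conv
set_option maxHeartbeats 2000000 in
/-- Convolution of bounded distributions: for `f` in the Tate algebra of radius `R`
and `‖c‖ ≤ R`, the translate `T_c f (x) = f(x+c)` lies in the Tate algebra;
the function `c ↦ ν(T_c f)` is given by an element of the Tate algebra; and
`(μ*ν)(f) = μ(c ↦ ν(T_c f))` defines a bounded distribution whose moments are
`(μ*ν)(x^k) = ∑_{m ≤ k} (k choose m) μ(x^m) ν(x^{k-m})`.
Here `K` plays the role of `ℂ_p`, and `R = p^q` with `q` rational. -/
theorem statement10 (p : ℕ) [Fact p.Prime] (hodd : Odd p)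
    {K : Type*} [NormedField K] [CompleteSpace K] [IsAlgClosed K] [Algebra ℚ_[p] K]
    (hnorm : ∀ x : ℚ_[p], ‖(algebraMap ℚ_[p] K) x‖ = ‖x‖)
    (hna : ∀ x y : K, ‖x + y‖ ≤ max ‖x‖ ‖y‖)
    (q : ℚ) (R : ℝ) (hR : R = (p : ℝ) ^ (q : ℝ))
    (μ ν : BDist K R) :
    (∀ a : ℕ → K, IsTate R a → ∀ c : K, ‖c‖ ≤ R →
        IsTate R (tateTranslate a c) ∧
        ∀ x : K, ‖x‖ ≤ R →
          ∑' m : ℕ, tateTranslate a c m * x ^ m = ∑' k : ℕ, a k * (x + c) ^ k) ∧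
    (∀ a : ℕ → K, IsTate R a →
        ∃ g : ℕ → K, IsTate R g ∧
          ∀ c : K, ‖c‖ ≤ R → ∀ h : IsTate R (tateTranslate a c),
            (∑' m : ℕ, g m * c ^ m) = ν.toFun ⟨tateTranslate a c, h⟩) ∧
    (∃ conv : BDist K R,
        (∀ (a : ℕ → K) (ha : IsTate R a) (g : ℕ → K) (hg : IsTate R g),
            (∀ c : K, ‖c‖ ≤ R → ∀ h : IsTate R (tateTranslate a c),
                (∑' m : ℕ, g m * c ^ m) = ν.toFun ⟨tateTranslate a c, h⟩) →
            conv.toFun ⟨a, ha⟩ = μ.toFun ⟨g, hg⟩) ∧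
        (∀ k : ℕ, conv.toFun (tateMono R k) =
            ∑ m ∈ Finset.range (k + 1),
              (k.choose m : K) * μ.toFun (tateMono R m) * ν.toFun (tateMono R (k - m)))) := by
  have hppos : (0 : ℝ) < p := by exact_mod_cast (Fact.out : p.Prime).pos
  have hR0 : 0 < R := by rw [hR]; exact Real.rpow_pos_of_pos hppos _
  have hone : ∀ n : ℕ, ‖(n : K)‖ ≤ 1 := by
    intro n
    rw [← map_natCast (algebraMap ℚ_[p] K) n, hnorm]
    simpa using Padic.norm_int_le_one (p := p) (n : ℤ)
  have hsmall : ∀ ε : ℝ, 0 < ε → ∃ c : K, c ≠ 0 ∧ ‖c‖ ≤ R ∧ ‖c‖ < ε := by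
    intro ε hε
    have hp1 : (1 : ℝ) < p := by exact_mod_cast (Fact.out : p.Prime).one_lt
    have hinv : (p : ℝ)⁻¹ < 1 := inv_lt_one_of_one_lt₀ hp1
    have hinv0 : 0 < (p : ℝ)⁻¹ := by positivity
    obtain ⟨n, hn⟩ := exists_pow_lt_of_lt_one (lt_min hε hR0) hinv
    have hnc : ‖algebraMap ℚ_[p] K ((p : ℚ_[p]) ^ n)‖ = ((p : ℝ)⁻¹) ^ n := by
      rw [hnorm, norm_pow, Padic.norm_p]
    refine ⟨algebraMap ℚ_[p] K ((p : ℚ_[p]) ^ n), ?_, ?_, ?_⟩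
    · intro hzero
      rw [hzero] at hnc
      simp only [norm_zero] at hnc
      have : (0 : ℝ) < ((p : ℝ)⁻¹) ^ n := by positivity
      linarith
    · rw [hnc]; exact le_of_lt (lt_of_lt_of_le hn (min_le_right _ _))
    · rw [hnc]; exact lt_of_lt_of_le hn (min_le_left _ _)
  refine ⟨?_, ?_, ?_⟩
  · intro a ha c hc
    exact ⟨isTate_translate hR0 hna hone ha hc,
      fun x hx => translate_eval hR0 hna hone ha hc hx⟩
  · intro a ha
    exact ⟨fun k => ν.toFun ⟨tateShift a k, isTate_shift hR0 hone ha k⟩,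
      gIsTate hR0 hna hone ν ha,
      fun c hc h => (rep_hasSum hR0 hna hone ν ha hc h).tsum_eq⟩
  · refine ⟨convDist hR0 hna hone μ ν, ?_, ?_⟩
    · intro a ha g hg hrep
      have hGT : IsTate R (fun j => ν.toFun ⟨tateShift a j, isTate_shift hR0 hone ha j⟩) :=
        gIsTate hR0 hna hone ν ha
      have hGg : ∀ j, g j = ν.toFun ⟨tateShift a j, isTate_shift hR0 hone ha j⟩ := by
        have hdT : IsTate R
            (fun j => g j - ν.toFun ⟨tateShift a j, isTate_shift hR0 hone ha j⟩) := by
          have heq : (fun j => g j - ν.toFun ⟨tateShift a j, isTate_shift hR0 hone ha j⟩)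
              = g + (-1 : K) •
                (fun j => ν.toFun ⟨tateShift a j, isTate_shift hR0 hone ha j⟩) := by
            funext j
            simp [sub_eq_add_neg]
          rw [heq]
          exact isTate_add hR0.le hg (isTate_smul _ hGT)
        have hzero : ∀ c : K, ‖c‖ ≤ R →
            ∑' m : ℕ, (g m - ν.toFun ⟨tateShift a m, isTate_shift hR0 hone ha m⟩) * c ^ m
              = 0 := by
          intro c hc
          have hT := isTate_translate hR0 hna hone ha hc
          have hsg : Summable (fun m => g m * c ^ m) := by
            simpa using shifted_summable hR0 hna hg hc 0
          have hsG : Summable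
              (fun m => ν.toFun ⟨tateShift a m, isTate_shift hR0 hone ha m⟩ * c ^ m) := by
            simpa using shifted_summable hR0 hna hGT hc 0
          have hsub :
              ∑' m : ℕ, (g m - ν.toFun ⟨tateShift a m, isTate_shift hR0 hone ha m⟩) * c ^ m
              = (∑' m : ℕ, g m * c ^ m)
                - ∑' m : ℕ, ν.toFun ⟨tateShift a m, isTate_shift hR0 hone ha m⟩ * c ^ m := by
            rw [← Summable.tsum_sub hsg hsG]
            exact tsum_congr fun m => by ring
          rw [hsub, hrep c hc hT, (rep_hasSum hR0 hna hone ν ha hc hT).tsum_eq, sub_self]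
        intro j
        exact sub_eq_zero.mp (coeff_unique hR0 hna hsmall hdT hzero j)
      show μ.toFun ⟨fun j => ν.toFun ⟨tateShift a j, isTate_shift hR0 hone ha j⟩,
        gIsTate hR0 hna hone ν ha⟩ = μ.toFun ⟨g, hg⟩
      exact μ.congr _ _ (funext fun j => (hGg j).symm)
    · intro k
      set w : ℕ → K := fun j => if j ≤ k then
        ((k.choose (k - j) : ℕ) : K) * ν.toFun (tateMono R (k - j)) else 0 with hw
      have hν : ∀ j, ν.toFun ⟨tateShift (tateMono R k).1 j,
          isTate_shift hR0 hone (tateMono R k).2 j⟩ = w j := by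
        intro j
        by_cases hj : j ≤ k
        · rw [hw]
          simp only [if_pos hj]
          apply ν.map_smul'
          funext m
          simp only [Pi.smul_apply, smul_eq_mul, tateShift, tateMono]
          by_cases hm : m = k - j
          · subst hm
            have h1 : k - j + j = k := by omega
            rw [h1]
            simp
          · have h2 : m + j ≠ k := by omega
            rw [if_neg h2, if_neg hm]
            ring
        · rw [hw]
          simp only [if_neg hj]
          apply ν.map_zero
          funext m
          simp only [tateShift, tateMono, Pi.zero_apply]
          rw [if_neg (by omega : ¬ m + j = k)]
          ring
      have hmain : μ.toFun ⟨fun j => ν.toFun ⟨tateShift (tateMono R k).1 j,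
            isTate_shift hR0 hone (tateMono R k).2 j⟩,
            gIsTate hR0 hna hone ν (tateMono R k).2⟩
          = ∑ j ∈ Finset.range (k + 1), w j * μ.toFun (tateMono R j) := by
        refine μ.map_finsum hR0.le (k + 1) (fun j => tateMono R j) w _ ?_
        funext i
        show ν.toFun ⟨tateShift (tateMono R k).1 i,
          isTate_shift hR0 hone (tateMono R k).2 i⟩ = _
        rw [hν i]
        rw [Finset.sum_apply]
        simp only [Pi.smul_apply, smul_eq_mul, tateMono, mul_ite, mul_one, mul_zero]
        rw [Finset.sum_ite_eq (Finset.range (k + 1)) i w]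
        by_cases hik : i ≤ k
        · rw [if_pos (Finset.mem_range.mpr (by omega))]
        · rw [if_neg (by simp only [Finset.mem_range]; omega), hw]
          simp only [if_neg hik]
      show μ.toFun ⟨fun j => ν.toFun ⟨tateShift (tateMono R k).1 j,
            isTate_shift hR0 hone (tateMono R k).2 j⟩,
            gIsTate hR0 hna hone ν (tateMono R k).2⟩ = _
      rw [hmain]
      refine Finset.sum_congr rfl fun m hm => ?_
      have hmk : m ≤ k := by
        have := Finset.mem_range.mp hm
        omega
      rw [hw]
      simp only [if_pos hmk, Nat.choose_symm hmk]
      ring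
end
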